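/- arXiv:0805.4575 — 3 statements merged into one kernel-verified Lean document; each statement's English description precedes it below -/
import Mathlib

section
/- The element z' lies in the cone C⁺_μ; explicitly, ⟨z', ω_i⟩ ≤ ⟨μ, ω_i⟩ for all i ∈ I. -/
/-!
Common setup: an abstract reduced irreducible crystallographic root system `R`
inside a real inner product space `E`, with simple roots `α i` (`i : ι`) forming
a basis of `E`, Weyl group generated by the reflections in the roots
(equivalently, by the simple reflections), coroot pairing
`⟨x, a∨⟩ = 2 (x, a) / (a, a)`, weight lattice `P(R)`, root lattices `Q(R)`,
`Q(R_J)`, etc.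
-/

open scoped BigOperators

noncomputable section

/-- the pairing `⟨x, a∨⟩ = 2 (x, a)/(a, a)` of `x` with the coroot of `a`. -/
def pairR {E : Type} [NormedAddCommGroup E] [InnerProductSpace ℝ E] (x a : E) : ℝ :=
  2 * (inner ℝ x a : ℝ) / (inner ℝ a a : ℝ)

/-- the reflection in (the hyperplane orthogonal to) `a`. -/
def reflFun {E : Type} [NormedAddCommGroup E] [InnerProductSpace ℝ E] (a : E) (x : E) : E :=
  x - pairR x a • a

/-- A reduced irreducible crystallographic root system in a real inner product
space `E`, whose set of simple roots `simple : ι → E` is a basis of `E`. -/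
structure RootSystemCtx (ι E : Type) [Fintype ι] [DecidableEq ι]
    [NormedAddCommGroup E] [InnerProductSpace ℝ E] : Type where
  Roots : Set E
  simple : ι → E
  simple_mem : ∀ i, simple i ∈ Roots
  finite : Roots.Finite
  ne_zero : ∀ a ∈ Roots, a ≠ 0
  reduced : ∀ a ∈ Roots, ∀ t : ℝ, t • a ∈ Roots → t = 1 ∨ t = -1
  crystal : ∀ a ∈ Roots, ∀ b ∈ Roots, ∃ n : ℤ, pairR a b = (n : ℝ)
  refl_stable : ∀ a ∈ Roots, ∀ b ∈ Roots, reflFun b a ∈ Roots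
  indep : LinearIndependent ℝ simple
  span_top : Submodule.span ℝ (Set.range simple) = ⊤
  pos_neg : ∀ a ∈ Roots, (∃ c : ι → ℕ, a = ∑ i, (c i : ℝ) • simple i) ∨
      (∃ c : ι → ℕ, a = -∑ i, (c i : ℝ) • simple i)
  irred : ∀ R1 R2 : Set E, Roots = R1 ∪ R2 →
      (∀ a ∈ R1, ∀ b ∈ R2, (inner ℝ a b : ℝ) = 0) → R1 = ∅ ∨ R2 = ∅

namespace RootSystemCtx

variable {ι E : Type} [Fintype ι] [DecidableEq ι]
  [NormedAddCommGroup E] [InnerProductSpace ℝ E]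
variable (S : RootSystemCtx ι E)

/-- `R` is simply laced: `⟨a, b∨⟩ ∈ {-1, 0, 1}` for roots `b ≠ ± a`. -/
def SimplyLaced : Prop :=
  ∀ a ∈ S.Roots, ∀ b ∈ S.Roots, b ≠ a → b ≠ -a →
    pairR a b = -1 ∨ pairR a b = 0 ∨ pairR a b = 1

/-- membership in the weight lattice `P(R)`. -/
def IsWeight (x : E) : Prop := ∀ a ∈ S.Roots, ∃ n : ℤ, pairR x a = (n : ℝ)

/-- `x` is dominant: `⟨x, αᵢ∨⟩ ≥ 0` for all simple roots. -/
def IsDominant (x : E) : Prop := ∀ i, 0 ≤ pairR x (S.simple i)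

/-- positive roots: roots that are nonnegative combinations of simple roots. -/
def IsPositiveRoot (a : E) : Prop :=
  a ∈ S.Roots ∧ ∃ c : ι → ℕ, a = ∑ i, (c i : ℝ) • S.simple i

/-- the root lattice `Q(R)`. -/
def rootLattice : AddSubgroup E := AddSubgroup.closure S.Roots

/-- the root lattice `Q(R_J)` of the sub-root system `R_J`. -/
def rootLatticeJ (J : Finset ι) : AddSubgroup E :=
  AddSubgroup.closure (S.simple '' ↑J)

/-- the sub-root system `R_J` determined by the simple roots `α_j`, `j ∈ J`. -/
def RootsJ (J : Finset ι) : Set E :=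
  {a | a ∈ S.Roots ∧ a ∈ Submodule.span ℝ (S.simple '' ↑J)}

/-- `x` is `J`-dominant. -/
def IsJDominant (J : Finset ι) (x : E) : Prop := ∀ j ∈ J, 0 ≤ pairR x (S.simple j)

/-- `x` is `J`-minuscule: `⟨x, a∨⟩ ∈ {-1,0,1}` for all `a ∈ R_J`. -/
def IsJMinuscule (J : Finset ι) (x : E) : Prop :=
  ∀ a ∈ S.RootsJ J, pairR x a = -1 ∨ pairR x a = 0 ∨ pairR x a = 1

/-- the action of a word `[i₁, …, i_t]` of simple reflections:
`s_{i₁} ∘ ⋯ ∘ s_{i_t}`. -/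
def wordAct (l : List ι) : E → E :=
  l.foldr (fun i f => reflFun (S.simple i) ∘ f) id

/-- membership in the Weyl group `W` (generated by the simple reflections). -/
def InWeyl (w : E → E) : Prop := ∃ l : List ι, S.wordAct l = w

/-- the Weyl group orbit `W x`. -/
def weylOrbit (x : E) : Set E := {y | ∃ l : List ι, y = S.wordAct l x}

/-- a word is reduced if no shorter word gives the same Weyl group element. -/
def IsReducedWord (l : List ι) : Prop :=
  ∀ l' : List ι, S.wordAct l' = S.wordAct l → l.length ≤ l'.length

/-- `w ∈ W` is `λ`-minuscule: some (equivalently, any) reduced expression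
`w = s_{i₁} ⋯ s_{i_t}` satisfies
`⟨s_{i_{r+1}} ⋯ s_{i_t} λ, α_{i_r}∨⟩ = -1` for all `1 ≤ r ≤ t`. -/
def IsMinusculeFor (lam : E) (w : E → E) : Prop :=
  ∃ l : List ι, S.wordAct l = w ∧ S.IsReducedWord l ∧
    ∀ r : Fin l.length,
      pairR (S.wordAct (l.drop (r + 1)) lam) (S.simple (l.get r)) = -1

/-- the basis of simple roots. -/
def simpleBasis : Module.Basis ι ℝ E := Module.Basis.mk S.indep S.span_top.ge

/-- `⟨x, ωᵢ⟩`: the pairing with the fundamental coweight `ωᵢ` dual to `αᵢ`,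
i.e. the `i`-th coordinate of `x` in the basis of simple roots. -/
def coweightPair (x : E) (i : ι) : ℝ := S.simpleBasis.repr x i

end RootSystemCtx
section AuxProof

variable {ι E : Type} [Fintype ι] [DecidableEq ι]
  [NormedAddCommGroup E] [InnerProductSpace ℝ E]

lemma real_inner_self_pos' {a : E} (ha : a ≠ 0) : 0 < (inner ℝ a a : ℝ) := by
  rw [real_inner_self_eq_norm_mul_norm]
  exact mul_pos (norm_pos_iff.mpr ha) (norm_pos_iff.mpr ha)

lemma pairR_add_left (x y a : E) : pairR (x + y) a = pairR x a + pairR y a := by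
  simp only [pairR, inner_add_left]; ring

lemma pairR_smul_left (c : ℝ) (x a : E) : pairR (c • x) a = c * pairR x a := by
  simp only [pairR, real_inner_smul_left]; ring

lemma pairR_sub_left (x y a : E) : pairR (x - y) a = pairR x a - pairR y a := by
  simp only [pairR, inner_sub_left]; ring

lemma pairR_self (a : E) (ha : a ≠ 0) : pairR a a = 2 := by
  have h : (inner ℝ a a : ℝ) ≠ 0 := ne_of_gt (real_inner_self_pos' ha)
  rw [pairR, mul_div_assoc, div_self h, mul_one]

lemma isLinear_reflFun (a : E) : IsLinearMap ℝ (reflFun a) := by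
  constructor
  · intro x y; simp only [reflFun, pairR_add_left, add_smul]; abel
  · intro c x; simp only [reflFun, pairR_smul_left, smul_sub, smul_smul]

lemma reflFun_reflFun (a x : E) : reflFun a (reflFun a x) = x := by
  by_cases ha : a = 0
  · simp [reflFun, pairR, ha]
  · have h2 : pairR (reflFun a x) a = - pairR x a := by
      simp only [reflFun, pairR_sub_left, pairR_smul_left, pairR_self a ha]; ring
    rw [show reflFun a (reflFun a x) = reflFun a x - pairR (reflFun a x) a • a from rfl, h2]
    simp only [reflFun]
    module

lemma inner_reflFun (a : E) (x y : E) :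
    (inner ℝ (reflFun a x) (reflFun a y) : ℝ) = inner ℝ x y := by
  by_cases ha : a = 0
  · simp [reflFun, pairR, ha]
  · have h : (inner ℝ a a : ℝ) ≠ 0 := ne_of_gt (real_inner_self_pos' ha)
    simp only [reflFun, pairR, inner_sub_left, inner_sub_right, real_inner_smul_left,
      real_inner_smul_right]
    rw [real_inner_comm a x, real_inner_comm a y]
    field_simp
    ring

namespace RootSystemCtx

variable (S : RootSystemCtx ι E)

lemma wordAct_nil : S.wordAct ([] : List ι) = id := rfl

lemma wordAct_cons (i : ι) (l : List ι) :
    S.wordAct (i :: l) = reflFun (S.simple i) ∘ S.wordAct l := rfl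

lemma wordAct_singleton (i : ι) : S.wordAct [i] = reflFun (S.simple i) := rfl

lemma wordAct_append (l₁ l₂ : List ι) :
    S.wordAct (l₁ ++ l₂) = S.wordAct l₁ ∘ S.wordAct l₂ := by
  induction l₁ with
  | nil => rfl
  | cons i t ih => rw [List.cons_append, wordAct_cons, wordAct_cons, ih]; rfl

lemma wordAct_mem_roots (l : List ι) {β : E} (hβ : β ∈ S.Roots) :
    S.wordAct l β ∈ S.Roots := by
  induction l with
  | nil => exact hβ
  | cons i t ih => exact S.refl_stable _ ih _ (S.simple_mem i)

lemma isLinear_wordAct (l : List ι) : IsLinearMap ℝ (S.wordAct l) := by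
  induction l with
  | nil => exact ⟨fun x y => rfl, fun c x => rfl⟩
  | cons i t ih =>
    constructor
    · intro x y
      simp only [wordAct_cons, Function.comp_apply, ih.map_add, (isLinear_reflFun _).map_add]
    · intro c x
      simp only [wordAct_cons, Function.comp_apply, ih.map_smul, (isLinear_reflFun _).map_smul]

lemma wordAct_inner (l : List ι) (x y : E) :
    (inner ℝ (S.wordAct l x) (S.wordAct l y) : ℝ) = inner ℝ x y := by
  induction l with
  | nil => rfl
  | cons i t ih =>
    rw [wordAct_cons]
    simp only [Function.comp_apply]
    rw [inner_reflFun]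
    exact ih

lemma wordAct_norm (l : List ι) (x : E) : ‖S.wordAct l x‖ = ‖x‖ := by
  have h := S.wordAct_inner l x x
  rw [real_inner_self_eq_norm_mul_norm, real_inner_self_eq_norm_mul_norm] at h
  exact (mul_self_inj (norm_nonneg _) (norm_nonneg _)).mp h

end RootSystemCtx

end AuxProof
section AuxProof2

variable {ι E : Type} [Fintype ι] [DecidableEq ι]
  [NormedAddCommGroup E] [InnerProductSpace ℝ E]

namespace RootSystemCtx

variable (S : RootSystemCtx ι E)

lemma simpleBasis_apply (i : ι) : S.simpleBasis i = S.simple i := Module.Basis.mk_apply _ _ i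

lemma repr_simple (j i : ι) :
    S.simpleBasis.repr (S.simple j) i = if j = i then 1 else 0 := by
  rw [← S.simpleBasis_apply, Module.Basis.repr_self, Finsupp.single_apply]

lemma repr_sum_smul (c : ι → ℝ) (J : Finset ι) (i : ι) :
    S.simpleBasis.repr (∑ j ∈ J, c j • S.simple j) i = if i ∈ J then c i else 0 := by
  rw [map_sum, Finsupp.finset_sum_apply]
  rw [Finset.sum_congr rfl (fun j _ => by
    rw [map_smul, Finsupp.smul_apply, S.repr_simple j i, smul_eq_mul])]
  simp only [mul_ite, mul_one, mul_zero]
  exact Finset.sum_ite_eq' J i c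

lemma repr_sum_univ (c : ι → ℝ) (i : ι) :
    S.simpleBasis.repr (∑ j, c j • S.simple j) i = c i := by
  rw [S.repr_sum_smul c Finset.univ i, if_pos (Finset.mem_univ i)]

lemma root_sign {β : E} (hβ : β ∈ S.Roots) :
    (∀ i, 0 ≤ S.simpleBasis.repr β i) ∨ (∀ i, S.simpleBasis.repr β i ≤ 0) := by
  rcases S.pos_neg β hβ with ⟨c, hc⟩ | ⟨c, hc⟩
  · left; intro i; rw [hc, S.repr_sum_univ]; exact Nat.cast_nonneg _
  · right; intro i
    rw [hc, map_neg, Finsupp.neg_apply, S.repr_sum_univ]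
    simp

lemma eq_zero_of_repr_zero {x : E} (h : ∀ i, S.simpleBasis.repr x i = 0) : x = 0 := by
  have h2 : S.simpleBasis.repr x = 0 := Finsupp.ext h
  exact (LinearEquiv.map_eq_zero_iff _).mp h2

lemma reflFun_simple_pos {β : E} (i : ι) (hβ : β ∈ S.Roots)
    (hpos : ∀ j, 0 ≤ S.simpleBasis.repr β j) (hne : β ≠ S.simple i) :
    ∀ j, 0 ≤ S.simpleBasis.repr (reflFun (S.simple i) β) j := by
  have hγR : reflFun (S.simple i) β ∈ S.Roots := S.refl_stable β hβ _ (S.simple_mem i)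
  rcases S.root_sign hγR with h | h
  · exact h
  · exfalso
    have hcoord : ∀ j, j ≠ i → S.simpleBasis.repr β j = 0 := by
      intro j hj
      have h1 : S.simpleBasis.repr (reflFun (S.simple i) β) j = S.simpleBasis.repr β j := by
        rw [show reflFun (S.simple i) β = β - pairR β (S.simple i) • S.simple i from rfl]
        rw [map_sub, map_smul, Finsupp.sub_apply, Finsupp.smul_apply, S.repr_simple i j,
          if_neg (fun hij => hj hij.symm)]
        simp
      have h3 := h j
      rw [h1] at h3
      exact le_antisymm h3 (hpos j)
    have hβ_eq : β = S.simpleBasis.repr β i • S.simple i := by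
      have hs := S.simpleBasis.sum_repr β
      rw [Finset.sum_eq_single i (fun j _ hj => by rw [hcoord j hj, zero_smul])
        (fun hi => absurd (Finset.mem_univ i) hi)] at hs
      rw [S.simpleBasis_apply] at hs
      exact hs.symm
    have hred := S.reduced (S.simple i) (S.simple_mem i) (S.simpleBasis.repr β i)
      (by rw [← hβ_eq]; exact hβ)
    rcases hred with h1 | h1
    · exact hne (by rw [hβ_eq, h1, one_smul])
    · have := hpos i; rw [h1] at this; linarith

lemma wordAct_reflFun (l : List ι) (β x : E) :
    S.wordAct l (reflFun β x) = reflFun (S.wordAct l β) (S.wordAct l x) := by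
  have hlin := S.isLinear_wordAct l
  have hp : pairR (S.wordAct l x) (S.wordAct l β) = pairR x β := by
    simp only [pairR, S.wordAct_inner]
  rw [show reflFun β x = x - pairR x β • β from rfl,
    show reflFun (S.wordAct l β) (S.wordAct l x)
      = S.wordAct l x - pairR (S.wordAct l x) (S.wordAct l β) • S.wordAct l β from rfl,
    hp, hlin.map_sub, hlin.map_smul]

lemma exchange : ∀ (l : List ι) (β : E), β ∈ S.Roots →
    (∀ j, 0 ≤ S.simpleBasis.repr β j) →
    (∀ j, S.simpleBasis.repr (S.wordAct l β) j ≤ 0) →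
    ∃ l' : List ι, l'.length + 1 = l.length ∧ S.wordAct l' = S.wordAct l ∘ reflFun β := by
  intro l
  induction l with
  | nil =>
    intro β hβ hpos hneg
    simp only [wordAct_nil, id] at hneg
    exact absurd (S.eq_zero_of_repr_zero (fun j => le_antisymm (hneg j) (hpos j)))
      (S.ne_zero β hβ)
  | cons i t ih =>
    intro β hβ hpos hneg
    have hvβR : S.wordAct t β ∈ S.Roots := S.wordAct_mem_roots t hβ
    rcases S.root_sign hvβR with hp | hn
    · have heq : S.wordAct t β = S.simple i := by
        by_contra hne
        have h2 := S.reflFun_simple_pos i hvβR hp hne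
        have h0 : reflFun (S.simple i) (S.wordAct t β) = 0 :=
          S.eq_zero_of_repr_zero (fun j => le_antisymm
            (by simpa [wordAct_cons] using hneg j) (h2 j))
        exact S.ne_zero _ (S.refl_stable _ hvβR _ (S.simple_mem i)) h0
      refine ⟨t, by simp, ?_⟩
      funext x
      have h3 := S.wordAct_reflFun t β x
      simp only [Function.comp_apply, wordAct_cons]
      rw [h3, heq, reflFun_reflFun]
    · obtain ⟨t', hlen, ht'⟩ := ih β hβ hpos hn
      refine ⟨i :: t', by simpa using hlen, ?_⟩
      funext x
      simp only [wordAct_cons, Function.comp_apply, ht']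

lemma domA : ∀ (n : ℕ) (l : List ι), l.length ≤ n → ∀ a : E, S.IsDominant a →
    ∀ i, S.simpleBasis.repr (S.wordAct l a) i ≤ S.simpleBasis.repr a i := by
  intro n
  induction n with
  | zero =>
    intro l hl a _ i
    have : l = [] := List.eq_nil_of_length_eq_zero (Nat.le_zero.mp hl)
    simp [this, wordAct_nil]
  | succ n ih =>
    intro l hl a ha i
    by_cases hmin : ∃ l' : List ι, l'.length < l.length ∧ S.wordAct l' = S.wordAct l
    · obtain ⟨l', h1, h2⟩ := hmin
      rw [← h2]
      exact ih l' (by omega) a ha i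
    · rcases List.eq_nil_or_concat l with rfl | ⟨l₀, i₀, rfl⟩
      · simp [wordAct_nil]
      · have hlen : (l₀.concat i₀).length = l₀.length + 1 := by simp
        have hdec : S.wordAct (l₀.concat i₀) = S.wordAct l₀ ∘ reflFun (S.simple i₀) := by
          rw [List.concat_eq_append, S.wordAct_append, S.wordAct_singleton]
        have hvroot : S.wordAct l₀ (S.simple i₀) ∈ S.Roots :=
          S.wordAct_mem_roots l₀ (S.simple_mem i₀)
        have hvpos : ∀ j, 0 ≤ S.simpleBasis.repr (S.wordAct l₀ (S.simple i₀)) j := by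
          rcases S.root_sign hvroot with hp | hn
          · exact hp
          · exfalso
            obtain ⟨l'', hl''len, hl''⟩ := S.exchange l₀ (S.simple i₀) (S.simple_mem i₀)
              (fun j => by rw [S.repr_simple]; split <;> norm_num) hn
            exact hmin ⟨l'', by rw [hlen]; omega, by rw [hl'', hdec]⟩
        have hsplit : S.wordAct (l₀.concat i₀) a
            = S.wordAct l₀ a - pairR a (S.simple i₀) • S.wordAct l₀ (S.simple i₀) := by
          rw [hdec]
          simp only [Function.comp_apply]
          rw [show reflFun (S.simple i₀) a = a - pairR a (S.simple i₀) • S.simple i₀ from rfl,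
            (S.isLinear_wordAct l₀).map_sub, (S.isLinear_wordAct l₀).map_smul]
        have h1 : S.simpleBasis.repr (S.wordAct l₀ a) i ≤ S.simpleBasis.repr a i :=
          ih l₀ (by omega) a ha i
        rw [hsplit, map_sub, map_smul, Finsupp.sub_apply, Finsupp.smul_apply, smul_eq_mul]
        have h2 : 0 ≤ pairR a (S.simple i₀) := ha i₀
        have h3 := hvpos i
        nlinarith

lemma closure_hull_repr_le (μ : E) (hμ : S.IsDominant μ) (i : ι) {x : E}
    (hx : x ∈ closure (convexHull ℝ (S.weylOrbit μ))) :
    S.simpleBasis.repr x i ≤ S.simpleBasis.repr μ i := by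
  haveI : FiniteDimensional ℝ E := Module.Finite.of_basis S.simpleBasis
  set f : E →ₗ[ℝ] ℝ := (Finsupp.lapply i).comp S.simpleBasis.repr.toLinearMap with hf
  have hfapp : ∀ v : E, f v = S.simpleBasis.repr v i := fun v => rfl
  have hconv : Convex ℝ {v : E | f v ≤ f μ} :=
    convex_halfSpace_le ⟨f.map_add, f.map_smul⟩ (f μ)
  have hclosed : IsClosed {v : E | f v ≤ f μ} :=
    isClosed_Iic.preimage f.continuous_of_finiteDimensional
  have horb : S.weylOrbit μ ⊆ {v : E | f v ≤ f μ} := by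
    rintro v ⟨l, rfl⟩
    simpa only [Set.mem_setOf_eq, hfapp] using S.domA l.length l le_rfl μ hμ i
  have := closure_minimal (convexHull_min horb hconv) hclosed hx
  simpa only [Set.mem_setOf_eq, hfapp] using this

lemma rootLattice_repr_int {x : E} (hx : x ∈ S.rootLattice) (i : ι) :
    ∃ m : ℤ, S.simpleBasis.repr x i = (m : ℝ) := by
  induction hx using AddSubgroup.closure_induction with
  | mem a ha =>
    rcases S.pos_neg a ha with ⟨c, hc⟩ | ⟨c, hc⟩
    · exact ⟨(c i : ℤ), by rw [hc, S.repr_sum_univ]; push_cast; ring⟩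
    · exact ⟨-(c i : ℤ), by rw [hc, map_neg, Finsupp.neg_apply, S.repr_sum_univ]; push_cast; ring⟩
  | zero => exact ⟨0, by simp⟩
  | add a b _ _ iha ihb =>
    obtain ⟨m1, h1⟩ := iha
    obtain ⟨m2, h2⟩ := ihb
    exact ⟨m1 + m2, by rw [map_add, Finsupp.add_apply, h1, h2]; push_cast; ring⟩
  | neg a _ iha =>
    obtain ⟨m, h⟩ := iha
    exact ⟨-m, by rw [map_neg, Finsupp.neg_apply, h]; push_cast; ring⟩

end RootSystemCtx

end AuxProof2
section AuxProof3

variable {ι E : Type} [Fintype ι] [DecidableEq ι]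
  [NormedAddCommGroup E] [InnerProductSpace ℝ E]

namespace RootSystemCtx

variable (S : RootSystemCtx ι E)

lemma y_mem_closure_hull (μ : E) (J : Finset ι) (y c : E)
    (hyorth : ∀ j ∈ J, (inner ℝ y (S.simple j) : ℝ) = 0)
    (hc : c ∈ convexHull ℝ (S.weylOrbit μ))
    (hcy : c - y ∈ Submodule.span ℝ (S.simple '' ↑J)) :
    y ∈ closure (convexHull ℝ (S.weylOrbit μ)) := by
  classical
  haveI : FiniteDimensional ℝ E := Module.Finite.of_basis S.simpleBasis
  set p : Submodule ℝ E := Submodule.span ℝ (S.simple '' ↑J) with hp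
  set OJ : Set E := {x | ∃ l : List ι, (∀ j ∈ l, j ∈ J) ∧ x = S.wordAct l c} with hOJ
  have hcOJ : c ∈ OJ := ⟨[], fun j h => absurd h List.not_mem_nil, rfl⟩
  set K : Set E := closure (convexHull ℝ OJ) with hK
  have hKconv : Convex ℝ K := (convex_convexHull ℝ OJ).closure
  have hOJsub : OJ ⊆ convexHull ℝ (S.weylOrbit μ) := by
    rintro x ⟨l, -, rfl⟩
    have hsub : convexHull ℝ (S.weylOrbit μ)
        ⊆ (S.wordAct l) ⁻¹' (convexHull ℝ (S.weylOrbit μ)) := by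
      apply convexHull_min
      · rintro v ⟨l', rfl⟩
        apply Set.mem_preimage.mpr
        apply subset_convexHull
        exact ⟨l ++ l', by rw [S.wordAct_append]; rfl⟩
      · exact (convex_convexHull ℝ _).is_linear_preimage (S.isLinear_wordAct l)
    exact hsub hc
  have hKsub : K ⊆ closure (convexHull ℝ (S.weylOrbit μ)) :=
    closure_mono (convexHull_min hOJsub (convex_convexHull ℝ _))
  have hBall : K ⊆ Metric.closedBall 0 ‖c‖ := by
    apply closure_minimal (convexHull_min ?_ (convex_closedBall 0 ‖c‖)) Metric.isClosed_closedBall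
    rintro x ⟨l, -, rfl⟩
    simpa [Metric.mem_closedBall, dist_zero_right] using le_of_eq (S.wordAct_norm l c)
  have hKcomp : IsCompact K :=
    (isCompact_closedBall 0 ‖c‖).of_isClosed_subset isClosed_closure hBall
  have hKne : K.Nonempty := ⟨c, subset_closure (subset_convexHull ℝ _ hcOJ)⟩
  have hcontdist : Continuous fun x : E => ‖x - y‖ := (continuous_id.sub continuous_const).norm
  obtain ⟨q, hqK, hqmin⟩ := hKcomp.exists_isMinOn hKne hcontdist.continuousOn
  have hstab : ∀ j ∈ J, ∀ x ∈ K, reflFun (S.simple j) x ∈ K := by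
    intro j hj
    have hcont : Continuous (reflFun (S.simple j)) := by
      have := (IsLinearMap.mk' _ (isLinear_reflFun (S.simple j))).continuous_of_finiteDimensional
      exact this
    have h1 : convexHull ℝ OJ ⊆ (reflFun (S.simple j)) ⁻¹' (convexHull ℝ OJ) := by
      apply convexHull_min
      · rintro x ⟨l, hl, rfl⟩
        apply Set.mem_preimage.mpr
        apply subset_convexHull
        refine ⟨j :: l, ?_, rfl⟩
        intro m hm
        rcases List.mem_cons.mp hm with rfl | hm
        · exact hj
        · exact hl m hm
      · exact (convex_convexHull ℝ _).is_linear_preimage (isLinear_reflFun _)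
    have h2 : K ⊆ (reflFun (S.simple j)) ⁻¹' K :=
      closure_minimal (h1.trans (Set.preimage_mono subset_closure))
        (isClosed_closure.preimage hcont)
    exact fun x hx => h2 hx
  have hfix : ∀ j ∈ J, reflFun (S.simple j) y = y := by
    intro j hj
    simp [reflFun, pairR, hyorth j hj]
  have hdist : ∀ j ∈ J, ∀ x : E, ‖reflFun (S.simple j) x - y‖ = ‖x - y‖ := by
    intro j hj x
    conv_lhs => rw [← hfix j hj]
    rw [← (isLinear_reflFun (S.simple j)).map_sub, ← S.wordAct_singleton j]
    exact S.wordAct_norm [j] (x - y)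
  have hqfix : ∀ j ∈ J, reflFun (S.simple j) q = q := by
    intro j hj
    by_contra hne
    set q' := reflFun (S.simple j) q with hq'
    have hq'K : q' ∈ K := hstab j hj q hqK
    have hd' : ‖q' - y‖ = ‖q - y‖ := hdist j hj q
    have hd0 : 0 < ‖q - y‖ := by
      rcases eq_or_lt_of_le (norm_nonneg (q - y)) with h0 | h0
      · exfalso
        have hqy : q = y := by
          have := (norm_eq_zero.mp h0.symm)
          rwa [sub_eq_zero] at this
        have hq'y : q' = y := by
          have h1 : ‖q' - y‖ = 0 := by rw [hd', ← h0]
          have := norm_eq_zero.mp h1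
          rwa [sub_eq_zero] at this
        exact hne (by rw [hq'y, hqy])
      · exact h0
    set m := (1 / 2 : ℝ) • (q + q') with hm
    have hmK : m ∈ K := by
      have := hKconv hqK hq'K (by norm_num : (0:ℝ) ≤ 1/2) (by norm_num : (0:ℝ) ≤ 1/2)
        (by norm_num : (1:ℝ)/2 + 1/2 = 1)
      simpa [hm, smul_add] using this
    have hpar := parallelogram_law_with_norm ℝ (q - y) (q' - y)
    have hmy : m - y = (1 / 2 : ℝ) • ((q - y) + (q' - y)) := by
      rw [hm]; module
    have hneq : (q - y) - (q' - y) ≠ 0 := by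
      intro h
      rw [sub_sub_sub_cancel_right, sub_eq_zero] at h
      exact hne h.symm
    have hnpos : 0 < ‖(q - y) - (q' - y)‖ := norm_pos_iff.mpr hneq
    have h1 : ‖m - y‖ = ‖(q - y) + (q' - y)‖ / 2 := by
      rw [hmy, norm_smul]
      simp
      ring
    have hlt : ‖m - y‖ < ‖q - y‖ := by
      rw [h1]
      nlinarith [norm_nonneg ((q - y) + (q' - y))]
    exact absurd (hqmin hmK) (not_le.mpr hlt)
  have hqorth : ∀ j ∈ J, (inner ℝ q (S.simple j) : ℝ) = 0 := by
    intro j hj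
    have hα : S.simple j ≠ 0 := S.ne_zero _ (S.simple_mem j)
    have h0 : pairR q (S.simple j) • S.simple j = 0 := by
      have h := hqfix j hj
      rw [show reflFun (S.simple j) q = q - pairR q (S.simple j) • S.simple j from rfl] at h
      have := sub_eq_self.mp h
      exact this
    rcases smul_eq_zero.mp h0 with h | h
    · have hne : (inner ℝ (S.simple j) (S.simple j) : ℝ) ≠ 0 :=
        ne_of_gt (real_inner_self_pos' hα)
      rw [pairR, div_eq_zero_iff] at h
      rcases h with h | h
      · linarith
      · exact absurd h hne
    · exact absurd h hα
  have hAffconv : Convex ℝ {x : E | x - y ∈ p} := by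
    intro a ha b hb s t hs ht hst
    have heq : s • a + t • b - y = s • (a - y) + t • (b - y) := by
      have h1 : t = 1 - s := by linarith
      rw [h1]; module
    simp only [Set.mem_setOf_eq] at ha hb ⊢
    rw [heq]
    exact p.add_mem (p.smul_mem _ ha) (p.smul_mem _ hb)
  have hAffclosed : IsClosed {x : E | x - y ∈ p} := by
    have heq : {x : E | x - y ∈ p} = (fun x : E => x - y) ⁻¹' (p : Set E) := rfl
    rw [heq]
    exact (Submodule.closed_of_finiteDimensional p).preimage
      (continuous_id.sub continuous_const)
  have hword : ∀ l : List ι, (∀ j ∈ l, j ∈ J) → S.wordAct l c - y ∈ p := by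
    intro l
    induction l with
    | nil => intro _; exact hcy
    | cons j t ihl =>
      intro hl
      have hx' := ihl (fun m hm => hl m (List.mem_cons_of_mem j hm))
      have heq : S.wordAct (j :: t) c - y
          = (S.wordAct t c - y) - pairR (S.wordAct t c) (S.simple j) • S.simple j := by
        rw [S.wordAct_cons]
        simp only [Function.comp_apply]
        rw [show reflFun (S.simple j) (S.wordAct t c)
          = S.wordAct t c - pairR (S.wordAct t c) (S.simple j) • S.simple j from rfl]
        abel
      rw [heq]
      refine p.sub_mem hx' (p.smul_mem _ (Submodule.subset_span ?_))
      exact ⟨j, by simpa using hl j List.mem_cons_self, rfl⟩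
  have hOJA : OJ ⊆ {x : E | x - y ∈ p} := by
    rintro x ⟨l, hl, rfl⟩
    exact hword l hl
  have hAff : q - y ∈ p :=
    closure_minimal (convexHull_min hOJA hAffconv) hAffclosed hqK
  have horthspan : ∀ v ∈ p, (inner ℝ (q - y) v : ℝ) = 0 := by
    intro v hv
    induction hv using Submodule.span_induction with
    | mem v hv =>
      obtain ⟨j, hj, rfl⟩ := hv
      rw [inner_sub_left, hqorth j (by simpa using hj), hyorth j (by simpa using hj)]
      ring
    | zero => exact inner_zero_right _
    | add a b _ _ iha ihb => rw [inner_add_right, iha, ihb]; ring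
    | smul r a _ iha => rw [real_inner_smul_right, iha]; ring
  have hqy : q = y := by
    have h0 := horthspan (q - y) hAff
    have := inner_self_eq_zero.mp h0
    rwa [sub_eq_zero] at this
  exact hKsub (hqy ▸ hqK)

end RootSystemCtx

end AuxProof3
/-- With the standing data of the paper (`μ ∈ P(R)` dominant;
`y` a dominant element of `P(R)/Q(R_J)` identified with an element of the
orthogonal complement of `span_ℝ {α_j : j ∈ J}`, with the same image as `μ` in
`P(R)/Q(R)` and whose image in `(P(R)/Q(R_J))⊗ℝ` lies in `pr_J(Conv(Wμ))`;
`z = y + ∑_{j∈J} k_j α_j` the unique `J`-minuscule `J`-dominant weight with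
`φ_J(z) = y`, `k_j ≥ 0`; `z' = y + ∑_{j∈J} (k_j - ⌊k_j⌋) α_j`):
the element `z'` lies in the cone `C⁺_μ`, i.e. `⟨z', ωᵢ⟩ ≤ ⟨μ, ωᵢ⟩` for all
`i ∈ I`. -/
theorem zPrime_mem_cone
    {ι E : Type} [Fintype ι] [DecidableEq ι]
    [NormedAddCommGroup E] [InnerProductSpace ℝ E]
    (S : RootSystemCtx ι E)
    (μ : E) (hμW : S.IsWeight μ) (hμdom : S.IsDominant μ)
    (J : Finset ι) (hJne : J.Nonempty) (hJprop : J ≠ Finset.univ)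
    (y : E) (hyorth : ∀ j ∈ J, (inner ℝ y (S.simple j) : ℝ) = 0)
    (hydom : S.IsDominant y)
    (hyconv : ∃ c ∈ convexHull ℝ (S.weylOrbit μ),
      c - y ∈ Submodule.span ℝ (S.simple '' ↑J))
    (k : ι → ℝ) (hk : ∀ j ∈ J, 0 ≤ k j)
    (z : E) (hz : z = y + ∑ j ∈ J, k j • S.simple j)
    (hzW : S.IsWeight z) (hzmin : S.IsJMinuscule J z) (hzdom : S.IsJDominant J z)
    (hzuniq : ∀ z₀ : E, S.IsWeight z₀ → S.IsJMinuscule J z₀ → S.IsJDominant J z₀ →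
      z₀ - z ∈ Submodule.span ℝ (S.simple '' ↑J) → z₀ = z)
    (hsame : z - μ ∈ S.rootLattice)
    (z' : E) (hz' : z' = y + ∑ j ∈ J, Int.fract (k j) • S.simple j) :
    ∀ i, S.coweightPair z' i ≤ S.coweightPair μ i := by
  classical
  intro i
  obtain ⟨c, hc, hcy⟩ := hyconv
  have hy_le : S.simpleBasis.repr y i ≤ S.simpleBasis.repr μ i :=
    S.closure_hull_repr_le μ hμdom i (S.y_mem_closure_hull μ J y c hyorth hc hcy)
  have hz'repr : S.simpleBasis.repr z' i
      = S.simpleBasis.repr y i + (if i ∈ J then Int.fract (k i) else 0) := by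
    rw [hz', map_add, Finsupp.add_apply, S.repr_sum_smul]
  have hzrepr : S.simpleBasis.repr z i
      = S.simpleBasis.repr y i + (if i ∈ J then k i else 0) := by
    rw [hz, map_add, Finsupp.add_apply, S.repr_sum_smul]
  show S.simpleBasis.repr z' i ≤ S.simpleBasis.repr μ i
  by_cases hiJ : i ∈ J
  · obtain ⟨m, hm⟩ := S.rootLattice_repr_int hsame i
    rw [map_sub, Finsupp.sub_apply] at hm
    rw [if_pos hiJ] at hz'repr hzrepr
    have hfloor : k i - Int.fract (k i) = (⌊k i⌋ : ℝ) := Int.self_sub_fract (k i)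
    have key : S.simpleBasis.repr μ i - S.simpleBasis.repr z' i = ((⌊k i⌋ - m : ℤ) : ℝ) := by
      push_cast
      rw [hz'repr]
      linarith [hzrepr, hm, hfloor]
    have hgt : (-1 : ℝ) < ((⌊k i⌋ - m : ℤ) : ℝ) := by
      rw [← key, hz'repr]
      have hf1 := Int.fract_lt_one (k i)
      linarith
    have hge : (0 : ℤ) ≤ ⌊k i⌋ - m := by
      have : (-1 : ℤ) < ⌊k i⌋ - m := by exact_mod_cast hgt
      omega
    have : (0 : ℝ) ≤ ((⌊k i⌋ - m : ℤ) : ℝ) := by exact_mod_cast hge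
    linarith [key]
  · rw [if_neg hiJ, add_zero] at hz'repr
    rw [hz'repr]
    exact hy_le
end
end

section
/- Let u ∈ Q(R_J)⊗ℝ be an element such that ⟨u, α∨⟩ ∈ [−1, 1] for all α ∈ R_J. Then ⟨u, β∨⟩ ∈ (−2, 2) for all β ∈ R. -/
/-!
Common setup: an abstract reduced irreducible crystallographic root system `R`
inside a real inner product space `E`, with simple roots `α i` (`i : ι`) forming
a basis of `E`, Weyl group generated by the reflections in the roots
(equivalently, by the simple reflections), coroot pairing
`⟨x, a∨⟩ = 2 (x, a) / (a, a)`, weight lattice `P(R)`, root lattices `Q(R)`,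
`Q(R_J)`, etc.
-/

open scoped BigOperators

noncomputable section

section AuxLemmas

variable {E : Type} [NormedAddCommGroup E] [InnerProductSpace ℝ E]

lemma aux_inner_self_pos (x : E) (hx : x ≠ 0) : (0:ℝ) < inner ℝ x x :=
  lt_of_le_of_ne real_inner_self_nonneg
    (fun h => hx (real_inner_self_nonpos.1 (le_of_eq h.symm)))

lemma aux_reflFun_inner (a x y : E) (ha : (inner ℝ a a : ℝ) ≠ 0) :
    (inner ℝ (reflFun a x) (reflFun a y) : ℝ) = inner ℝ x y := by
  simp only [reflFun, pairR, inner_sub_left, inner_sub_right, real_inner_smul_left,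
    real_inner_smul_right]
  rw [real_inner_comm a x, real_inner_comm a y]
  field_simp
  ring

lemma aux_reflFun_invol (a x : E) (ha : (inner ℝ a a : ℝ) ≠ 0) :
    reflFun a (reflFun a x) = x := by
  have h1 : (inner ℝ (reflFun a x) a : ℝ) = - inner ℝ x a := by
    simp only [reflFun, pairR, inner_sub_left, real_inner_smul_left]
    field_simp
    ring
  simp only [reflFun, pairR] at h1 ⊢
  rw [h1]
  have h2 : 2 * -(inner ℝ x a : ℝ) / inner ℝ a a = -(2 * inner ℝ x a / inner ℝ a a) := by ring
  rw [h2, neg_smul, sub_neg_eq_add]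
  abel

lemma aux_reflFun_self (a : E) (ha : (inner ℝ a a : ℝ) ≠ 0) : reflFun a a = -a := by
  have h : pairR a a = 2 := by unfold pairR; field_simp
  rw [reflFun, h, two_smul]
  abel

/-- key reflection-symmetry identity: if `F` is stable under the reflection in `γ`,
then `∑ δ ∈ F, ⟪γ,δ⟫ • δ` is proportional to `γ`. -/
lemma aux_refl_sum (F : Finset E) (γ : E) (hγ0 : (inner ℝ γ γ : ℝ) ≠ 0)
    (hstab : ∀ δ ∈ F, reflFun γ δ ∈ F) :
    ∑ δ ∈ F, (inner ℝ γ δ : ℝ) • δ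
      = ((∑ δ ∈ F, (inner ℝ γ δ : ℝ)^2) / (inner ℝ γ γ : ℝ)) • γ := by
  have hinv : ∀ x : E, reflFun γ (reflFun γ x) = x := fun x => aux_reflFun_invol γ x hγ0
  have hre : ∑ δ ∈ F, (inner ℝ γ δ : ℝ) • δ
      = ∑ δ ∈ F, (inner ℝ γ (reflFun γ δ) : ℝ) • (reflFun γ δ) := by
    refine Finset.sum_bij' (fun δ _ => reflFun γ δ) (fun δ _ => reflFun γ δ)
      hstab hstab (fun a _ => hinv a) (fun a _ => hinv a) ?_
    intro a _
    rw [hinv a]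
  have hneg : ∀ δ : E, (inner ℝ γ (reflFun γ δ) : ℝ) = -(inner ℝ γ δ : ℝ) := by
    intro δ
    have h1 : (inner ℝ (reflFun γ γ) (reflFun γ (reflFun γ δ)) : ℝ) = inner ℝ γ (reflFun γ δ) :=
      aux_reflFun_inner γ γ (reflFun γ δ) hγ0
    rw [aux_reflFun_self γ hγ0, hinv δ, inner_neg_left] at h1
    linarith
  have hterm : ∀ δ ∈ F, (inner ℝ γ (reflFun γ δ) : ℝ) • (reflFun γ δ)
      = -((inner ℝ γ δ : ℝ) • δ) + ((2 * (inner ℝ γ δ : ℝ)^2 / (inner ℝ γ γ : ℝ)) • γ) := by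
    intro δ _
    rw [hneg δ]
    simp only [reflFun, pairR, smul_sub, neg_smul, smul_smul]
    rw [real_inner_comm δ γ]
    module
  rw [Finset.sum_congr rfl hterm, Finset.sum_add_distrib, ← Finset.sum_smul,
    Finset.sum_neg_distrib] at hre
  have h2 : (2:ℝ) • (∑ δ ∈ F, (inner ℝ γ δ : ℝ) • δ)
      = ((∑ δ ∈ F, 2 * (inner ℝ γ δ : ℝ)^2 / (inner ℝ γ γ : ℝ))) • γ := by
    rw [two_smul]
    linear_combination (norm := module) hre
  have h3 : (∑ δ ∈ F, 2 * (inner ℝ γ δ : ℝ)^2 / (inner ℝ γ γ : ℝ))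
      = 2 * ((∑ δ ∈ F, (inner ℝ γ δ : ℝ)^2) / (inner ℝ γ γ : ℝ)) := by
    rw [Finset.sum_div, Finset.mul_sum]
    apply Finset.sum_congr rfl
    intro x _
    ring
  rw [h3] at h2
  have h4 : (2:ℝ) • (∑ δ ∈ F, (inner ℝ γ δ : ℝ) • δ)
      = (2:ℝ) • (((∑ δ ∈ F, (inner ℝ γ δ : ℝ)^2) / (inner ℝ γ γ : ℝ)) • γ) := by
    rw [h2, smul_smul]
  exact smul_right_injective E two_ne_zero h4

end AuxLemmas

/-- Core estimate: `⟨u, β∨⟩ < 2` for every root `β`. -/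
lemma aux_core {ι E : Type} [Fintype ι] [DecidableEq ι]
    [NormedAddCommGroup E] [InnerProductSpace ℝ E]
    (S : RootSystemCtx ι E) (hSL : S.SimplyLaced) (J : Finset ι)
    (u : E) (huJ : u ∈ Submodule.span ℝ (S.simple '' ↑J))
    (hu : ∀ a ∈ S.RootsJ J, -1 ≤ pairR u a ∧ pairR u a ≤ 1) :
    ∀ b ∈ S.Roots, pairR u b < 2 := by
  classical
  intro b hb
  set K : Submodule ℝ E := Submodule.span ℝ (S.simple '' ↑J) with hKdef
  by_cases hbK : b ∈ K
  · have h := (hu b ⟨hb, hbK⟩).2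
    linarith
  have hroots_pos : ∀ a ∈ S.Roots, (0:ℝ) < inner ℝ a a := fun a ha =>
    aux_inner_self_pos a (S.ne_zero a ha)
  haveI : FiniteDimensional ℝ E := Module.Finite.of_basis S.simpleBasis
  haveI : CompleteSpace K := FiniteDimensional.complete ℝ K
  have hRJfin : (S.RootsJ J).Finite := S.finite.subset (fun a ha => ha.1)
  set F : Finset E := hRJfin.toFinset with hFdef
  have hmemF : ∀ δ : E, δ ∈ F ↔ δ ∈ S.RootsJ J := fun δ => hRJfin.mem_toFinset
  have hFK : ∀ δ ∈ F, δ ∈ K := fun δ hδ => ((hmemF δ).1 hδ).2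
  have hFR : ∀ δ ∈ F, δ ∈ S.Roots := fun δ hδ => ((hmemF δ).1 hδ).1
  set w : E := K.starProjection b with hwdef
  have hwK : w ∈ K := K.starProjection_apply_mem b
  have horth : ∀ z ∈ K, (inner ℝ (b - w) z : ℝ) = 0 := fun z hz => K.starProjection_inner_eq_zero b z hz
  have hwδ : ∀ δ ∈ F, (inner ℝ w δ : ℝ) = inner ℝ b δ := by
    intro δ hδ
    have h := horth δ (hFK δ hδ)
    rw [inner_sub_left] at h
    linarith
  have hvals : ∀ δ ∈ F, (inner ℝ b δ : ℝ) = 0 ∨ (inner ℝ b δ : ℝ) = (inner ℝ δ δ : ℝ)/2 ∨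
      (inner ℝ b δ : ℝ) = -((inner ℝ δ δ : ℝ)/2) := by
    intro δ hδ
    have hδR := hFR δ hδ
    have hδK := hFK δ hδ
    have hδδ : (0:ℝ) < inner ℝ δ δ := hroots_pos δ hδR
    have hδb : δ ≠ b := fun h => hbK (h ▸ hδK)
    have hδb' : δ ≠ -b := by
      intro h
      apply hbK
      have hb' : b = -δ := by rw [h, neg_neg]
      rw [hb']
      exact K.neg_mem hδK
    have hpm := hSL b hb δ hδR hδb hδb'
    unfold pairR at hpm
    rcases hpm with h | h | h
    · right; right
      have := (div_eq_iff (ne_of_gt hδδ)).1 h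
      linarith
    · left
      have := (div_eq_iff (ne_of_gt hδδ)).1 h
      linarith
    · right; left
      have := (div_eq_iff (ne_of_gt hδδ)).1 h
      linarith
  have huδ : ∀ δ ∈ F, -((inner ℝ δ δ : ℝ)/2) ≤ (inner ℝ u δ : ℝ) ∧
      (inner ℝ u δ : ℝ) ≤ (inner ℝ δ δ : ℝ)/2 := by
    intro δ hδ
    have hδδ : (0:ℝ) < inner ℝ δ δ := hroots_pos δ (hFR δ hδ)
    obtain ⟨h1, h2⟩ := hu δ ((hmemF δ).1 hδ)
    unfold pairR at h1 h2
    constructor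
    · rw [le_div_iff₀ hδδ] at h1
      linarith
    · rw [div_le_iff₀ hδδ] at h2
      linarith
  have hkey : ∀ δ ∈ F, (inner ℝ w δ : ℝ) * (inner ℝ u δ : ℝ) ≤ (inner ℝ w δ : ℝ)^2 := by
    intro δ hδ
    obtain ⟨h1, h2⟩ := huδ δ hδ
    rw [hwδ δ hδ]
    rcases hvals δ hδ with h | h | h <;> rw [h] <;> nlinarith
  -- the "Casimir coefficients"
  set t : E → ℝ := fun γ => (∑ δ ∈ F, (inner ℝ γ δ : ℝ)^2) / (inner ℝ γ γ : ℝ) with htdef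
  have ht : ∀ γ ∈ F, ∑ δ ∈ F, (inner ℝ γ δ : ℝ) • δ = t γ • γ := by
    intro γ hγ
    have hγR := hFR γ hγ
    have hγ0 : (inner ℝ γ γ : ℝ) ≠ 0 := ne_of_gt (hroots_pos γ hγR)
    refine aux_refl_sum F γ hγ0 ?_
    intro δ hδ
    rw [hmemF]
    constructor
    · exact S.refl_stable δ (hFR δ hδ) γ hγR
    · show reflFun γ δ ∈ Submodule.span ℝ (S.simple '' ↑J)
      have h1 : δ ∈ K := hFK δ hδ
      have h2 : γ ∈ K := hFK γ hγ
      exact Submodule.sub_mem _ h1 (Submodule.smul_mem _ _ h2)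
  have htpos : ∀ γ ∈ F, 0 < t γ := by
    intro γ hγ
    have hγγ : (0:ℝ) < inner ℝ γ γ := hroots_pos γ (hFR γ hγ)
    have hle : (inner ℝ γ γ : ℝ)^2 ≤ ∑ δ ∈ F, (inner ℝ γ δ : ℝ)^2 :=
      Finset.single_le_sum (f := fun δ => (inner ℝ γ δ : ℝ)^2) (fun i _ => sq_nonneg _) hγ
    exact div_pos (lt_of_lt_of_le (pow_pos hγγ 2) hle) hγγ
  -- decompose w in terms of the roots of R_J
  have hwspan : w ∈ Submodule.span ℝ (↑F : Set E) := by
    have hsub : S.simple '' ↑J ⊆ (↑F : Set E) := by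
      rintro x ⟨j, hj, rfl⟩
      have : S.simple j ∈ S.RootsJ J :=
        ⟨S.simple_mem j, Submodule.subset_span ⟨j, hj, rfl⟩⟩
      simpa [hmemF] using this
    exact Submodule.span_mono hsub hwK
  obtain ⟨d, -, hd⟩ := Submodule.mem_span_finset.1 hwspan
  set y : E := ∑ δ ∈ F, (d δ / t δ) • δ with hydef
  have hTy : ∑ δ ∈ F, (inner ℝ y δ : ℝ) • δ = w := by
    have hstep : ∀ δ ∈ F, (inner ℝ y δ : ℝ) • δ
        = ∑ γ ∈ F, (d γ / t γ) • ((inner ℝ γ δ : ℝ) • δ) := by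
      intro δ _
      rw [hydef, sum_inner, Finset.sum_smul]
      apply Finset.sum_congr rfl
      intro γ _
      rw [real_inner_smul_left, mul_smul]
    rw [Finset.sum_congr rfl hstep, Finset.sum_comm]
    have hstep2 : ∀ γ ∈ F, ∑ δ ∈ F, (d γ / t γ) • ((inner ℝ γ δ : ℝ) • δ) = d γ • γ := by
      intro γ hγ
      rw [← Finset.smul_sum, ht γ hγ, smul_smul, div_mul_cancel₀ _ (ne_of_gt (htpos γ hγ))]
    rw [Finset.sum_congr rfl hstep2, hd]
  have hyγ : ∀ γ ∈ F, (inner ℝ y γ : ℝ) * t γ = inner ℝ w γ := by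
    intro γ hγ
    have h1 : (inner ℝ w γ : ℝ) = ∑ δ ∈ F, (inner ℝ y δ : ℝ) * (inner ℝ δ γ : ℝ) := by
      rw [← hTy, sum_inner]
      apply Finset.sum_congr rfl
      intro δ _
      rw [real_inner_smul_left]
    have h2 : ∑ δ ∈ F, (inner ℝ y δ : ℝ) * (inner ℝ δ γ : ℝ) = (inner ℝ y (t γ • γ) : ℝ) := by
      rw [← ht γ hγ, inner_sum]
      apply Finset.sum_congr rfl
      intro δ _
      rw [real_inner_smul_right, real_inner_comm δ γ]
      ring
    rw [h1, h2, real_inner_smul_right]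
    ring
  have hsum : ∀ z : E, (inner ℝ w z : ℝ) = ∑ δ ∈ F, (inner ℝ y δ : ℝ) * (inner ℝ δ z : ℝ) := by
    intro z
    rw [← hTy, sum_inner]
    apply Finset.sum_congr rfl
    intro δ _
    rw [real_inner_smul_left]
  have hle : (inner ℝ w u : ℝ) ≤ inner ℝ w w := by
    rw [hsum u, hsum w]
    apply Finset.sum_le_sum
    intro δ hδ
    have h1 := hyγ δ hδ
    have h2 := htpos δ hδ
    have h3 := hkey δ hδ
    have hyδ : (inner ℝ y δ : ℝ) = (inner ℝ w δ : ℝ) / t δ := by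
      field_simp
      linarith [h1]
    rw [hyδ, real_inner_comm u δ, real_inner_comm w δ]
    rw [div_mul_eq_mul_div, div_mul_eq_mul_div]
    refine (div_le_div_iff_of_pos_right h2).2 ?_
    nlinarith [h3]
  -- conclude
  have hub : (inner ℝ u b : ℝ) = inner ℝ w u := by
    have h := horth u huJ
    rw [inner_sub_left] at h
    rw [real_inner_comm b u]
    linarith
  have hb2 : b = (b - w) + w := by abel
  have hexp : (inner ℝ b b : ℝ) = inner ℝ (b-w) (b-w) + 2 * inner ℝ (b-w) w + inner ℝ w w := by
    conv_lhs => rw [hb2]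
    exact real_inner_add_add_self _ _
  have hcross : (inner ℝ (b-w) w : ℝ) = 0 := horth w hwK
  have hne : b - w ≠ 0 := by
    intro h
    rw [sub_eq_zero] at h
    exact hbK (h ▸ hwK)
  have hpos2 : (0:ℝ) < inner ℝ (b-w) (b-w) := aux_inner_self_pos _ hne
  have hwlt : (inner ℝ w w : ℝ) < inner ℝ b b := by
    rw [hexp, hcross]
    linarith
  have hbb := hroots_pos b hb
  unfold pairR
  rw [div_lt_iff₀ hbb]
  have hfin : (inner ℝ u b : ℝ) < inner ℝ b b := by
    rw [hub]
    linarith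
  linarith

/-- (simply-laced case) Let `u ∈ Q(R_J) ⊗ ℝ` be such that
`⟨u, α∨⟩ ∈ [-1, 1]` for all `α ∈ R_J`. Then `⟨u, β∨⟩ ∈ (-2, 2)` for all
`β ∈ R`. -/
theorem pairing_lt_two_of_J_bounded
    {ι E : Type} [Fintype ι] [DecidableEq ι]
    [NormedAddCommGroup E] [InnerProductSpace ℝ E]
    (S : RootSystemCtx ι E) (hSL : S.SimplyLaced)
    (J : Finset ι) (hJne : J.Nonempty) (hJprop : J ≠ Finset.univ)
    (u : E) (huJ : u ∈ Submodule.span ℝ (S.simple '' ↑J))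
    (hu : ∀ a ∈ S.RootsJ J, -1 ≤ pairR u a ∧ pairR u a ≤ 1) :
    ∀ b ∈ S.Roots, -2 < pairR u b ∧ pairR u b < 2 := by
  intro b hb
  have hneg : ∀ a ∈ S.RootsJ J, -1 ≤ pairR (-u) a ∧ pairR (-u) a ≤ 1 := by
    intro a ha
    obtain ⟨h1, h2⟩ := hu a ha
    have hp : pairR (-u) a = -pairR u a := by
      unfold pairR
      rw [inner_neg_left]
      ring
    rw [hp]
    constructor <;> linarith
  have hlow := aux_core S hSL J (-u) (Submodule.neg_mem _ huJ) hneg b hb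
  have hp : pairR (-u) b = -pairR u b := by
    unfold pairR
    rw [inner_neg_left]
    ring
  rw [hp] at hlow
  exact ⟨by linarith, aux_core S hSL J u huJ hu b hb⟩
end
end

section
/- For every β ∈ R⁺∖R_J the following hold: (−β)_J lies in ℳ_J; the function u ↦ ⟨u, β∨⟩ on ℳ_J attains its minimum at u = (−β)_J, i.e. ⟨u, β∨⟩ ≥ ⟨(−β)_J, β∨⟩ for all u ∈ ℳ_J; and ⟨(−β)_J, β∨⟩ > −2. -/
/-!
Common setup: an abstract reduced irreducible crystallographic root system `R`
inside a real inner product space `E`, with simple roots `α i` (`i : ι`) forming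
a basis of `E`, Weyl group generated by the reflections in the roots
(equivalently, by the simple reflections), coroot pairing
`⟨x, a∨⟩ = 2 (x, a) / (a, a)`, weight lattice `P(R)`, root lattices `Q(R)`,
`Q(R_J)`, etc.
-/

open scoped BigOperators

noncomputable section

section ConeLemma

variable {E : Type} [NormedAddCommGroup E] [InnerProductSpace ℝ E]

private lemma rsp_inner_self_pos {x : E} (hx : x ≠ 0) : 0 < (inner ℝ x x : ℝ) :=
  lt_of_le_of_ne real_inner_self_nonneg (Ne.symm (inner_self_ne_zero.2 hx))

private lemma rsp_exists_generic :
    ∀ D : Finset E, (∀ δ ∈ D, δ ≠ (0 : E)) →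
      ∃ z : E, ∀ δ ∈ D, (inner ℝ z δ : ℝ) ≠ 0 := by
  classical
  intro D
  induction D using Finset.induction_on with
  | empty => exact fun _ => ⟨0, fun δ h => absurd h (Finset.notMem_empty δ)⟩
  | @insert δ s hδs ih =>
    intro hD
    obtain ⟨z, hz⟩ := ih fun x hx => hD x (Finset.mem_insert_of_mem hx)
    have hδ : δ ≠ 0 := hD δ (Finset.mem_insert_self δ s)
    by_cases h0 : (inner ℝ z δ : ℝ) = 0
    · obtain ⟨t, ht⟩ := Infinite.exists_notMem_finset
        (insert (0:ℝ) (s.image fun x => -((inner ℝ z x : ℝ) / (inner ℝ δ x : ℝ))))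
      have ht0 : t ≠ 0 := fun h => ht (by simp [h])
      refine ⟨z + t • δ, ?_⟩
      intro x hx
      rcases Finset.mem_insert.1 hx with rfl | hxs
      · rw [inner_add_left, real_inner_smul_left, h0, zero_add]
        exact mul_ne_zero ht0 (ne_of_gt (rsp_inner_self_pos hδ))
      · rw [inner_add_left, real_inner_smul_left]
        by_cases hdx : (inner ℝ δ x : ℝ) = 0
        · rw [hdx, mul_zero, add_zero]; exact hz x hxs
        · intro hcon
          apply ht
          have hteq : t = -((inner ℝ z x : ℝ) / (inner ℝ δ x : ℝ)) := by
            field_simp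
            linarith
          exact Finset.mem_insert_of_mem (Finset.mem_image.2 ⟨x, hxs, hteq.symm⟩)
    · exact ⟨z, fun x hx => by
        rcases Finset.mem_insert.1 hx with rfl | hxs
        · exact h0
        · exact hz x hxs⟩

private lemma rsp_exists_eps (b z : E) :
    ∀ s : Finset E, (∀ γ ∈ s, 0 < (inner ℝ b γ : ℝ)) →
      ∃ ε : ℝ, 0 < ε ∧ ∀ γ ∈ s, ε * |(inner ℝ z γ : ℝ)| < (inner ℝ b γ : ℝ) := by
  classical
  intro s
  induction s using Finset.induction_on with
  | empty => exact fun _ => ⟨1, one_pos, fun γ h => absurd h (Finset.notMem_empty γ)⟩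
  | @insert γ s hγs ih =>
    intro hs
    obtain ⟨ε, hε, hεlt⟩ := ih fun x hx => hs x (Finset.mem_insert_of_mem hx)
    have hbγ : 0 < (inner ℝ b γ : ℝ) := hs γ (Finset.mem_insert_self γ s)
    have habs : (0:ℝ) ≤ |(inner ℝ z γ : ℝ)| := abs_nonneg _
    refine ⟨min ε ((inner ℝ b γ : ℝ) / (|(inner ℝ z γ : ℝ)| + 1)), ?_, ?_⟩
    · exact lt_min hε (div_pos hbγ (by linarith))
    · intro x hx
      rcases Finset.mem_insert.1 hx with rfl | hxs
      · calc min ε ((inner ℝ b x : ℝ) / (|(inner ℝ z x : ℝ)| + 1)) * |(inner ℝ z x : ℝ)|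
            ≤ ((inner ℝ b x : ℝ) / (|(inner ℝ z x : ℝ)| + 1)) * |(inner ℝ z x : ℝ)| := by
              apply mul_le_mul_of_nonneg_right (min_le_right _ _) (abs_nonneg _)
          _ < (inner ℝ b x : ℝ) := by
              rw [div_mul_eq_mul_div, div_lt_iff₀ (by positivity)]
              nlinarith [abs_nonneg (inner ℝ z x : ℝ)]
      · calc min ε ((inner ℝ b γ : ℝ) / (|(inner ℝ z γ : ℝ)| + 1)) * |(inner ℝ z x : ℝ)|
            ≤ ε * |(inner ℝ z x : ℝ)| :=
              mul_le_mul_of_nonneg_right (min_le_left _ _) (abs_nonneg _)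
          _ < (inner ℝ b x : ℝ) := hεlt x hxs

private lemma rsp_reflection_apply (δ : E) (hδ : δ ≠ 0) (x : E) :
    (Submodule.reflection (ℝ ∙ δ)ᗮ) x = x - pairR x δ • δ := by
  rw [Submodule.reflection_orthogonal_apply, Submodule.reflection_singleton_apply]
  have h2 : (inner ℝ δ δ : ℝ) ≠ 0 := inner_self_ne_zero.2 hδ
  rw [two_smul]
  unfold pairR
  simp only [RCLike.ofReal_real_eq_id, id_eq]
  rw [real_inner_comm x δ, ← real_inner_self_eq_norm_sq]
  rw [neg_sub]
  congr 1
  rw [← two_smul ℝ, smul_smul]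
  congr 1
  field_simp

private lemma rsp_cone (Φ : Finset E)
    (h0 : ∀ γ ∈ Φ, γ ≠ (0 : E))
    (hneg : ∀ γ ∈ Φ, -γ ∈ Φ)
    (hrefl : ∀ γ ∈ Φ, ∀ δ ∈ Φ, γ - pairR γ δ • δ ∈ Φ)
    (hcrys : ∀ γ ∈ Φ, ∀ δ ∈ Φ, ∃ n : ℤ, pairR γ δ = (n : ℝ))
    (hred : ∀ γ ∈ Φ, ∀ δ ∈ Φ, ∀ t : ℝ, γ = t • δ → t = 1 ∨ t = -1)
    (b : E) (hb : b ∈ Submodule.span ℝ (Φ : Set E))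
    (u : E) (hu : ∀ γ ∈ Φ, 0 < (inner ℝ b γ : ℝ) → -(inner ℝ b γ : ℝ) ≤ (inner ℝ u γ : ℝ)) :
    -(inner ℝ b b : ℝ) ≤ (inner ℝ u b : ℝ) := by
  classical
  set D : Finset E := Φ.filter (fun γ => (inner ℝ b γ : ℝ) = 0) with hDdef
  have hDΦ : ∀ δ ∈ D, δ ∈ Φ := fun δ hδ => (Finset.mem_filter.1 hδ).1
  have hDb : ∀ δ ∈ D, (inner ℝ b δ : ℝ) = 0 := fun δ hδ => (Finset.mem_filter.1 hδ).2
  have hD0 : ∀ δ ∈ D, δ ≠ (0:E) := fun δ hδ => h0 δ (hDΦ δ hδ)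
  obtain ⟨z, hz⟩ := rsp_exists_generic D hD0
  obtain ⟨ε, hε, hεlt⟩ := rsp_exists_eps b z (Φ.filter fun γ => 0 < (inner ℝ b γ : ℝ))
      (fun γ hγ => (Finset.mem_filter.1 hγ).2)
  set f : E → ℝ := fun x => (inner ℝ (b + ε • z) x : ℝ) with hfdef
  have hfadd : ∀ x y, f (x + y) = f x + f y := fun x y => inner_add_right _ x y
  have hfneg : ∀ x, f (-x) = - f x := fun x => inner_neg_right _ x
  have hfval : ∀ x, f x = (inner ℝ b x : ℝ) + ε * (inner ℝ z x : ℝ) := by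
    intro x; simp only [hfdef, inner_add_left, real_inner_smul_left]
  have hfpos : ∀ γ ∈ Φ, 0 < (inner ℝ b γ : ℝ) → 0 < f γ := by
    intro γ hγ hbγ
    have h1 := hεlt γ (Finset.mem_filter.2 ⟨hγ, hbγ⟩)
    have h3 : |ε * (inner ℝ z γ : ℝ)| = ε * |(inner ℝ z γ : ℝ)| := by
      rw [abs_mul, abs_of_pos hε]
    rw [hfval]
    nlinarith [neg_abs_le (ε * (inner ℝ z γ : ℝ))]
  have hfne : ∀ γ ∈ Φ, f γ ≠ 0 := by
    intro γ hγ
    rcases lt_trichotomy (inner ℝ b γ : ℝ) 0 with h | h | h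
    · have h2 : 0 < f (-γ) := hfpos (-γ) (hneg γ hγ) (by rw [inner_neg_right]; linarith)
      rw [hfneg] at h2; intro hcon; rw [hcon] at h2; simp at h2
    · rw [hfval, h, zero_add]
      exact mul_ne_zero (ne_of_gt hε) (hz γ (Finset.mem_filter.2 ⟨hγ, h⟩))
    · exact ne_of_gt (hfpos γ hγ h)
  set Pos : Finset E := Φ.filter (fun γ => 0 < f γ) with hPosdef
  have hPosΦ : ∀ γ ∈ Pos, γ ∈ Φ := fun γ hγ => (Finset.mem_filter.1 hγ).1
  have hPosf : ∀ γ ∈ Pos, 0 < f γ := fun γ hγ => (Finset.mem_filter.1 hγ).2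
  have hPos_or : ∀ γ ∈ Φ, γ ∈ Pos ∨ -γ ∈ Pos := by
    intro γ hγ
    rcases (hfne γ hγ).lt_or_gt with h | h
    · right; refine Finset.mem_filter.2 ⟨hneg γ hγ, ?_⟩; rw [hfneg]; linarith
    · left; exact Finset.mem_filter.2 ⟨hγ, h⟩
  have hbge : ∀ γ ∈ Pos, 0 ≤ (inner ℝ b γ : ℝ) := by
    intro γ hγ
    by_contra hlt
    push_neg at hlt
    have h1 : 0 < f (-γ) := hfpos (-γ) (hneg γ (hPosΦ γ hγ)) (by rw [inner_neg_right]; linarith)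
    rw [hfneg] at h1
    have := hPosf γ hγ
    linarith
  set Δ : Finset E := Pos.filter (fun α => ¬ ∃ x ∈ Pos, ∃ y ∈ Pos, α = x + y) with hΔdef
  have hΔPos : ∀ α ∈ Δ, α ∈ Pos := fun α hα => (Finset.mem_filter.1 hα).1
  -- every positive element lies in the span of the indecomposables
  have hspan : ∀ γ ∈ Pos, γ ∈ Submodule.span ℝ (Δ : Set E) := by
    have H : ∀ n : ℕ, ∀ γ ∈ Pos, (Pos.filter fun x => f x < f γ).card ≤ n →
        γ ∈ Submodule.span ℝ (Δ : Set E) := by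
      intro n
      induction n with
      | zero =>
        intro γ hγ hcard
        by_cases hdec : ∃ x ∈ Pos, ∃ y ∈ Pos, γ = x + y
        · exfalso
          obtain ⟨x, hx, y, hy, hxy⟩ := hdec
          have hfx : f x < f γ := by have := hPosf y hy; rw [hxy, hfadd]; linarith
          have hmem : x ∈ Pos.filter fun t => f t < f γ := Finset.mem_filter.2 ⟨hx, hfx⟩
          have := Finset.card_pos.2 ⟨x, hmem⟩
          omega
        · exact Submodule.subset_span (Finset.mem_coe.2 (Finset.mem_filter.2 ⟨hγ, hdec⟩))
      | succ n ih =>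
        intro γ hγ hcard
        by_cases hdec : ∃ x ∈ Pos, ∃ y ∈ Pos, γ = x + y
        · obtain ⟨x, hx, y, hy, hxy⟩ := hdec
          have hfx : f x < f γ := by have := hPosf y hy; rw [hxy, hfadd]; linarith
          have hfy : f y < f γ := by have := hPosf x hx; rw [hxy, hfadd]; linarith
          have key : ∀ t ∈ Pos, f t < f γ → (Pos.filter fun s => f s < f t).card ≤ n := by
            intro t ht hft
            have hsub : (Pos.filter fun s => f s < f t) ⊂ (Pos.filter fun s => f s < f γ) := by
              constructor
              · intro s hs
                have hs' := Finset.mem_filter.1 hs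
                exact Finset.mem_filter.2 ⟨hs'.1, lt_trans hs'.2 hft⟩
              · intro hcontra
                have : t ∈ Pos.filter fun s => f s < f t :=
                  hcontra (Finset.mem_filter.2 ⟨ht, hft⟩)
                exact absurd (Finset.mem_filter.1 this).2 (lt_irrefl _)
            have := Finset.card_lt_card hsub
            omega
          have hxs := ih x hx (key x hx hfx)
          have hys := ih y hy (key y hy hfy)
          rw [hxy]
          exact Submodule.add_mem _ hxs hys
        · exact Submodule.subset_span (Finset.mem_coe.2 (Finset.mem_filter.2 ⟨hγ, hdec⟩))
    intro γ hγ
    exact H _ γ hγ le_rfl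
  have hbΔ : b ∈ Submodule.span ℝ (Δ : Set E) := by
    refine Submodule.span_le.2 ?_ hb
    intro γ hγ
    rcases hPos_or γ (Finset.mem_coe.1 hγ) with h | h
    · exact hspan γ h
    · have h2 := Submodule.neg_mem _ (hspan _ h)
      simpa using h2
  -- indecomposables are pairwise obtuse
  have obtuse : ∀ α ∈ Δ, ∀ α' ∈ Δ, α ≠ α' → (inner ℝ α α' : ℝ) ≤ 0 := by
    intro α hα α' hα' hne
    by_contra hpos
    push_neg at hpos
    have hαΦ : α ∈ Φ := hPosΦ α (hΔPos α hα)
    have hα'Φ : α' ∈ Φ := hPosΦ α' (hΔPos α' hα')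
    have hα0 : α ≠ 0 := h0 α hαΦ
    have hα'0 : α' ≠ 0 := h0 α' hα'Φ
    have hip : 0 < (inner ℝ α α : ℝ) := rsp_inner_self_pos hα0
    have hip' : 0 < (inner ℝ α' α' : ℝ) := rsp_inner_self_pos hα'0
    have hne' : α ≠ -α' := by
      intro hcon
      rw [hcon, inner_neg_left] at hpos
      linarith
    -- strict Cauchy-Schwarz
    have hCS : (inner ℝ α α' : ℝ) * (inner ℝ α α' : ℝ) < (inner ℝ α α : ℝ) * (inner ℝ α' α' : ℝ) := by
      have hw0 : (inner ℝ α' α' : ℝ) • α - (inner ℝ α α' : ℝ) • α' ≠ 0 := by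
        intro hcon
        rw [sub_eq_zero] at hcon
        have hα_eq : α = ((inner ℝ α α' : ℝ) / (inner ℝ α' α' : ℝ)) • α' := by
          have h2 : ((inner ℝ α' α' : ℝ))⁻¹ • ((inner ℝ α' α' : ℝ) • α)
              = ((inner ℝ α' α' : ℝ))⁻¹ • ((inner ℝ α α' : ℝ) • α') := by rw [hcon]
          rw [smul_smul, inv_mul_cancel₀ (ne_of_gt hip'), one_smul, smul_smul] at h2
          rw [div_eq_inv_mul]; exact h2
        rcases hred α hαΦ α' hα'Φ _ hα_eq with h1 | h1
        · rw [h1, one_smul] at hα_eq; exact hne hα_eq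
        · rw [h1, neg_one_smul] at hα_eq; exact hne' hα_eq
      have hwpos := rsp_inner_self_pos hw0
      have hexp : (inner ℝ ((inner ℝ α' α' : ℝ) • α - (inner ℝ α α' : ℝ) • α')
            ((inner ℝ α' α' : ℝ) • α - (inner ℝ α α' : ℝ) • α') : ℝ) =
          (inner ℝ α' α' : ℝ) * ((inner ℝ α α : ℝ) * (inner ℝ α' α' : ℝ)
            - (inner ℝ α α' : ℝ) * (inner ℝ α α' : ℝ)) := by
        simp only [inner_sub_left, inner_sub_right, real_inner_smul_left, real_inner_smul_right,
          real_inner_comm α' α]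
        ring
      rw [hexp] at hwpos
      nlinarith
    obtain ⟨n, hn⟩ := hcrys α hαΦ α' hα'Φ
    obtain ⟨m, hm⟩ := hcrys α' hα'Φ α hαΦ
    have h5 : (inner ℝ α' α : ℝ) = (inner ℝ α α' : ℝ) := by rw [real_inner_comm]
    have hn1 : 1 ≤ n := by
      have : (0:ℝ) < (n:ℝ) := by
        rw [← hn]
        unfold pairR
        exact div_pos (by linarith) hip'
      exact_mod_cast this
    have hm1 : 1 ≤ m := by
      have : (0:ℝ) < (m:ℝ) := by
        rw [← hm]
        unfold pairR
        rw [h5]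
        exact div_pos (by linarith) hip
      exact_mod_cast this
    have hprod : n * m ≤ 3 := by
      have h4 : (n:ℝ) * (m:ℝ) < 4 := by
        rw [← hn, ← hm]
        unfold pairR
        rw [h5, div_mul_div_comm, div_lt_iff₀ (by positivity)]
        nlinarith
      have h7 : n * m < 4 := by exact_mod_cast h4
      omega
    have hnm : n = 1 ∨ m = 1 := by
      by_contra hcon
      push_neg at hcon
      have h8 : 2 ≤ n := by omega
      have h9 : 2 ≤ m := by omega
      nlinarith
    have hsub : α - α' ∈ Φ := by
      rcases hnm with h | h
      · have := hrefl α hαΦ α' hα'Φ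
        rw [hn, h] at this
        simpa using this
      · have := hrefl α' hα'Φ α hαΦ
        rw [hm, h] at this
        have h2 := hneg _ this
        simpa using h2
    rcases hPos_or _ hsub with hp | hp
    · exact (Finset.mem_filter.1 hα).2 ⟨α', hΔPos α' hα', α - α', hp, by abel⟩
    · exact (Finset.mem_filter.1 hα').2 ⟨α, hΔPos α hα, -(α - α'), hp, by abel⟩
  -- representation of b with nonnegative coefficients
  obtain ⟨c, -, hc⟩ := Submodule.mem_span_finset.1 hbΔ
  set P : Finset E := Δ.filter (fun α => 0 ≤ c α) with hPdef
  set N : Finset E := Δ.filter (fun α => ¬ 0 ≤ c α) with hNdef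
  have hPpos : ∀ α ∈ P, 0 ≤ c α := fun α hα => (Finset.mem_filter.1 hα).2
  have hNneg : ∀ α ∈ N, c α < 0 := fun α hα => lt_of_not_ge (Finset.mem_filter.1 hα).2
  have hPΔ : ∀ α ∈ P, α ∈ Δ := fun α hα => (Finset.mem_filter.1 hα).1
  have hNΔ : ∀ α ∈ N, α ∈ Δ := fun α hα => (Finset.mem_filter.1 hα).1
  have hPN : (∑ α ∈ P, c α • α) + (∑ α ∈ N, c α • α) = b := by
    rw [hPdef, hNdef, Finset.sum_filter_add_sum_filter_not]
    exact hc
  have hvN0 : (∑ α ∈ N, c α • α) = 0 := by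
    have h1 : (inner ℝ (∑ α ∈ N, c α • α) b : ℝ) ≤ 0 := by
      rw [sum_inner]
      apply Finset.sum_nonpos
      intro α hα
      rw [real_inner_smul_left]
      have h2 := hbge α (hΔPos α (hNΔ α hα))
      have h3 := hNneg α hα
      have h4 : (inner ℝ α b : ℝ) = inner ℝ b α := real_inner_comm b α
      nlinarith
    have h2 : 0 ≤ (inner ℝ (∑ α ∈ N, c α • α) (∑ α ∈ P, c α • α) : ℝ) := by
      rw [sum_inner]
      apply Finset.sum_nonneg
      intro α hα
      rw [real_inner_smul_left, inner_sum, Finset.mul_sum]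
      apply Finset.sum_nonneg
      intro α' hα'
      rw [real_inner_smul_right]
      have hnee : α ≠ α' := by
        intro h
        rw [h] at hα
        exact (Finset.mem_filter.1 hα).2 (hPpos α' hα')
      have hob := obtuse α (hNΔ α hα) α' (hPΔ α' hα') hnee
      have h3 := hNneg α hα
      have h4 := hPpos α' hα'
      have h5 : c α' * (inner ℝ α α' : ℝ) ≤ 0 := mul_nonpos_of_nonneg_of_nonpos h4 hob
      nlinarith [mul_nonneg (neg_nonneg.2 (le_of_lt h3)) (neg_nonneg.2 h5)]
    have h3 : (inner ℝ (∑ α ∈ N, c α • α) (∑ α ∈ N, c α • α) : ℝ) ≤ 0 := by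
      have h4 : (∑ α ∈ N, c α • α) = b - (∑ α ∈ P, c α • α) := by
        rw [← hPN]; abel
      nth_rewrite 2 [h4]
      rw [inner_sub_right]
      linarith
    exact inner_self_eq_zero.1 (le_antisymm h3 real_inner_self_nonneg)
  have hbP : (∑ α ∈ P, c α • α) = b := by rw [← hPN, hvN0, add_zero]
  -- the subgroup generated by reflections orthogonal to b
  set gens : Set (E ≃ₗᵢ[ℝ] E) := {g | ∃ δ ∈ D, g = Submodule.reflection (ℝ ∙ δ)ᗮ} with hgensdef
  set G : Subgroup (E ≃ₗᵢ[ℝ] E) := Subgroup.closure gens with hGdef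
  set K : Submodule ℝ E := Submodule.span ℝ (Φ : Set E) with hKdef
  have hDK : Submodule.span ℝ (D : Set E) ≤ K := by
    apply Submodule.span_mono
    intro x hx
    exact Finset.mem_coe.2 (hDΦ x (Finset.mem_coe.1 hx))
  have hcanc1 : ∀ (g : E ≃ₗᵢ[ℝ] E) (y : E), g⁻¹ (g y) = y := by
    intro g y
    have h1 : (g⁻¹ * g) y = (1 : E ≃ₗᵢ[ℝ] E) y := by rw [inv_mul_cancel]
    simpa [LinearIsometryEquiv.coe_mul, LinearIsometryEquiv.coe_one] using h1
  have hcanc2 : ∀ (g : E ≃ₗᵢ[ℝ] E) (y : E), g (g⁻¹ y) = y := by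
    intro g y
    have h1 : (g * g⁻¹) y = (1 : E ≃ₗᵢ[ℝ] E) y := by rw [mul_inv_cancel]
    simpa [LinearIsometryEquiv.coe_mul, LinearIsometryEquiv.coe_one] using h1
  have hGprop : ∀ g ∈ G, (∀ γ ∈ Φ, g γ ∈ Φ) ∧ g b = b ∧
      (∀ x : E, g x - x ∈ Submodule.span ℝ (D : Set E)) := by
    intro g hg
    rw [hGdef] at hg
    induction hg using Subgroup.closure_induction with
    | mem x hx =>
      obtain ⟨δ, hδ, rfl⟩ := hx
      have hrδ : ∀ y : E, (Submodule.reflection (ℝ ∙ δ)ᗮ) y = y - pairR y δ • δ :=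
        rsp_reflection_apply δ (hD0 δ hδ)
      refine ⟨?_, ?_, ?_⟩
      · intro γ hγ
        rw [hrδ]
        exact hrefl γ hγ δ (hDΦ δ hδ)
      · rw [hrδ]
        unfold pairR
        rw [hDb δ hδ]
        simp
      · intro x
        rw [hrδ]
        have h1 : x - pairR x δ • δ - x = (-(pairR x δ)) • δ := by
          rw [neg_smul]; abel
        rw [h1]
        exact Submodule.smul_mem _ _ (Submodule.subset_span (Finset.mem_coe.2 hδ))
    | one =>
      refine ⟨fun γ hγ => ?_, ?_, fun x => ?_⟩
      · simpa using hγ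
      · simp
      · simp
    | mul x y hx hy px py =>
      obtain ⟨px1, px2, px3⟩ := px
      obtain ⟨py1, py2, py3⟩ := py
      refine ⟨fun γ hγ => ?_, ?_, fun t => ?_⟩
      · rw [LinearIsometryEquiv.coe_mul]
        exact px1 _ (py1 γ hγ)
      · rw [LinearIsometryEquiv.coe_mul]
        simp only [Function.comp_apply]
        rw [py2, px2]
      · rw [LinearIsometryEquiv.coe_mul]
        simp only [Function.comp_apply]
        have h1 : x (y t) - t = (x (y t) - y t) + (y t - t) := by abel
        rw [h1]
        exact Submodule.add_mem _ (px3 (y t)) (py3 t)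
    | inv x hx px =>
      obtain ⟨px1, px2, px3⟩ := px
      have himg : Φ.image (fun γ => x γ) = Φ := by
        apply Finset.eq_of_subset_of_card_le
        · intro γ hγ
          obtain ⟨γ', hγ', rfl⟩ := Finset.mem_image.1 hγ
          exact px1 γ' hγ'
        · rw [Finset.card_image_of_injective _ x.injective]
      refine ⟨fun γ hγ => ?_, ?_, fun t => ?_⟩
      · rw [← himg] at hγ
        obtain ⟨γ', hγ', rfl⟩ := Finset.mem_image.1 hγ
        rw [hcanc1]
        exact hγ'
      · conv_lhs => rw [← px2]
        rw [hcanc1]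
      · have h1 : x⁻¹ t - t = -(x (x⁻¹ t) - x⁻¹ t) := by
          rw [hcanc2]; abel
        rw [h1]
        exact Submodule.neg_mem _ (px3 (x⁻¹ t))
  haveI hKfd : FiniteDimensional ℝ K := FiniteDimensional.span_of_finite ℝ (Φ.finite_toSet)
  have hfix : ∀ g ∈ G, ∀ x ∈ Kᗮ, g x = x := by
    intro g hg x hx
    obtain ⟨hmap, hgb, hdiff⟩ := hGprop g hg
    have hxperp : ∀ v ∈ Submodule.span ℝ (D : Set E), (inner ℝ x v : ℝ) = 0 := by
      intro v hv
      have := (Submodule.mem_orthogonal K x).1 hx v (hDK hv)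
      rw [real_inner_comm]
      exact this
    have hgen : ∀ δ ∈ D, (inner ℝ (g x) δ : ℝ) = 0 := by
      intro δ hδ
      have hginv := hGprop g⁻¹ (inv_mem hg)
      have h1 : g⁻¹ δ ∈ Submodule.span ℝ (D : Set E) := by
        have h2 := hginv.2.2 δ
        have h3 : δ ∈ Submodule.span ℝ (D : Set E) :=
          Submodule.subset_span (Finset.mem_coe.2 hδ)
        have h4 := Submodule.add_mem _ h2 h3
        simpa using h4
      have h5 : (inner ℝ (g x) δ : ℝ) = inner ℝ x (g⁻¹ δ) := by
        conv_lhs => rw [← hcanc2 g δ]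
        exact LinearIsometryEquiv.inner_map_map g x (g⁻¹ δ)
      rw [h5]
      exact hxperp _ h1
    have hgxperp : ∀ v ∈ Submodule.span ℝ (D : Set E), (inner ℝ (g x) v : ℝ) = 0 := by
      intro v hv
      induction hv using Submodule.span_induction with
      | mem w hw => exact hgen w (Finset.mem_coe.1 hw)
      | zero => exact inner_zero_right _
      | add w1 w2 h1 h2 ih1 ih2 => rw [inner_add_right, ih1, ih2, add_zero]
      | smul t w hw ih => rw [real_inner_smul_right, ih, mul_zero]
    have hy := hdiff x
    have h6 : (inner ℝ (g x - x) (g x - x) : ℝ) = 0 := by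
      rw [inner_sub_right]
      have e1 : (inner ℝ (g x - x) (g x) : ℝ) = 0 := by
        rw [real_inner_comm]; exact hgxperp _ hy
      have e2 : (inner ℝ (g x - x) x : ℝ) = 0 := by
        rw [real_inner_comm]; exact hxperp _ hy
      rw [e1, e2, sub_zero]
    have h8 := inner_self_eq_zero.1 h6
    rw [sub_eq_zero] at h8
    exact h8
  -- G is finite
  haveI : Fintype {x // x ∈ Φ} := FinsetCoe.fintype Φ
  have hGfinite : Finite G := by
    set Ψ : G → ({x // x ∈ Φ} → {x // x ∈ Φ}) :=
      fun g x => ⟨(g : E ≃ₗᵢ[ℝ] E) x.1, (hGprop g.1 g.2).1 x.1 x.2⟩ with hΨdef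
    apply Finite.of_injective Ψ
    intro g g' hΨeq
    have hagree : ∀ γ ∈ Φ, (g : E ≃ₗᵢ[ℝ] E) γ = (g' : E ≃ₗᵢ[ℝ] E) γ := by
      intro γ hγ
      have h1 := congrFun hΨeq ⟨γ, hγ⟩
      exact Subtype.ext_iff.1 h1
    have hagreeK : ∀ y ∈ K, (g : E ≃ₗᵢ[ℝ] E) y = (g' : E ≃ₗᵢ[ℝ] E) y := by
      intro y hy
      induction hy using Submodule.span_induction with
      | mem w hw => exact hagree w (Finset.mem_coe.1 hw)
      | zero => rw [map_zero, map_zero]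
      | add w1 w2 hw1 hw2 ih1 ih2 => rw [map_add, map_add, ih1, ih2]
      | smul t w hw ih => rw [map_smul, map_smul, ih]
    apply Subtype.ext
    apply LinearIsometryEquiv.ext
    intro x
    have hx1 : ((Submodule.orthogonalProjectionOnto K x : K) : E) ∈ K := SetLike.coe_mem _
    have hx2 : x - ((Submodule.orthogonalProjectionOnto K x : K) : E) ∈ Kᗮ :=
      by rw [Submodule.coe_orthogonalProjectionOnto_apply]; exact Submodule.sub_starProjection_mem_orthogonal x
    set x1 : E := ((Submodule.orthogonalProjectionOnto K x : K) : E)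
    have hxdec : x = x1 + (x - x1) := by abel
    have hxdec2 : x1 + (x - x1) = x := by abel
    calc (g : E ≃ₗᵢ[ℝ] E) x = (g : E ≃ₗᵢ[ℝ] E) x1 + (g : E ≃ₗᵢ[ℝ] E) (x - x1) := by
          rw [← map_add, hxdec2]
      _ = (g' : E ≃ₗᵢ[ℝ] E) x1 + (x - x1) := by
          rw [hagreeK x1 hx1, hfix g.1 g.2 _ hx2]
      _ = (g' : E ≃ₗᵢ[ℝ] E) x1 + (g' : E ≃ₗᵢ[ℝ] E) (x - x1) := by
          rw [hfix g'.1 g'.2 _ hx2]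
      _ = (g' : E ≃ₗᵢ[ℝ] E) x := by rw [← map_add, hxdec2]
  haveI : Fintype G := @Fintype.ofFinite G hGfinite
  haveI : Nonempty G := ⟨⟨1, one_mem G⟩⟩
  set nG : ℕ := Fintype.card G with hnGdef
  have hnGpos : 0 < (nG : ℝ) := by
    have := Fintype.card_pos (α := G)
    exact_mod_cast this
  set msum : E → E := fun α => ∑ g : G, (g : E ≃ₗᵢ[ℝ] E) α with hmsumdef
  -- msum vanishes on D
  have hmD : ∀ α ∈ D, msum α = 0 := by
    intro α hα
    have hσspan : msum α ∈ Submodule.span ℝ (D : Set E) := by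
      apply Submodule.sum_mem
      intro g _
      have h1 := (hGprop g.1 g.2).2.2 α
      have h2 : α ∈ Submodule.span ℝ (D : Set E) :=
        Submodule.subset_span (Finset.mem_coe.2 hα)
      have h3 := Submodule.add_mem _ h1 h2
      simpa using h3
    have hσperp : ∀ δ ∈ D, (inner ℝ (msum α) δ : ℝ) = 0 := by
      intro δ hδ
      have hrG : Submodule.reflection (ℝ ∙ δ)ᗮ ∈ G := Subgroup.subset_closure ⟨δ, hδ, rfl⟩
      set r : G := ⟨Submodule.reflection (ℝ ∙ δ)ᗮ, hrG⟩ with hrdef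
      have hfixσ : (Submodule.reflection (ℝ ∙ δ)ᗮ) (msum α) = msum α := by
        rw [hmsumdef]
        simp only []
        rw [map_sum]
        refine Fintype.sum_equiv (Equiv.mulLeft r) _ _ ?_
        intro g
        show ((r * g : G) : E ≃ₗᵢ[ℝ] E) α = (Submodule.reflection (ℝ ∙ δ)ᗮ) ((g : E ≃ₗᵢ[ℝ] E) α)
        rw [Subgroup.coe_mul, LinearIsometryEquiv.coe_mul]
        rfl
      rw [rsp_reflection_apply δ (hD0 δ hδ)] at hfixσ
      have h1 : pairR (msum α) δ • δ = 0 := by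
        have := sub_eq_self.1 hfixσ
        exact this
      have h2 : pairR (msum α) δ = 0 := by
        rcases smul_eq_zero.1 h1 with h | h
        · exact h
        · exact absurd h (hD0 δ hδ)
      unfold pairR at h2
      have h3 : (inner ℝ δ δ : ℝ) ≠ 0 := inner_self_ne_zero.2 (hD0 δ hδ)
      field_simp at h2
      linarith
    have hperpall : ∀ v ∈ Submodule.span ℝ (D : Set E), (inner ℝ (msum α) v : ℝ) = 0 := by
      intro v hv
      induction hv using Submodule.span_induction with
      | mem w hw => exact hσperp w (Finset.mem_coe.1 hw)
      | zero => exact inner_zero_right _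
      | add w1 w2 h1 h2 ih1 ih2 => rw [inner_add_right, ih1, ih2, add_zero]
      | smul t w hw ih => rw [real_inner_smul_right, ih, mul_zero]
    exact inner_self_eq_zero.1 (hperpall _ hσspan)
  -- lower bound for ⟪u, msum α⟫
  have hm_bound : ∀ α ∈ P, -(nG:ℝ) * (inner ℝ b α : ℝ) ≤ (inner ℝ u (msum α) : ℝ) := by
    intro α hα
    have hαPos : α ∈ Pos := hΔPos α (hPΔ α hα)
    have hαΦ : α ∈ Φ := hPosΦ α hαPos
    rcases (hbge α hαPos).lt_or_eq with hposα | heq0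
    · rw [hmsumdef]
      simp only []
      rw [inner_sum]
      have hkey : ∀ g : G, -(inner ℝ b α : ℝ) ≤ (inner ℝ u ((g : E ≃ₗᵢ[ℝ] E) α) : ℝ) := by
        intro g
        obtain ⟨hmap, hgb, _⟩ := hGprop g.1 g.2
        have h1 : (inner ℝ b ((g : E ≃ₗᵢ[ℝ] E) α) : ℝ) = (inner ℝ b α : ℝ) := by
          conv_lhs => rw [← hgb]
          exact LinearIsometryEquiv.inner_map_map _ b α
        have h2 := hu ((g : E ≃ₗᵢ[ℝ] E) α) (hmap α hαΦ) (by rw [h1]; exact hposα)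
        rw [h1] at h2
        exact h2
      calc -(nG:ℝ) * (inner ℝ b α : ℝ) = ∑ _g : G, -(inner ℝ b α : ℝ) := by
            rw [Finset.sum_const, Finset.card_univ, ← hnGdef, nsmul_eq_mul]
            ring
        _ ≤ ∑ g : G, (inner ℝ u ((g : E ≃ₗᵢ[ℝ] E) α) : ℝ) :=
            Finset.sum_le_sum (fun g _ => hkey g)
    · have hαD : α ∈ D := Finset.mem_filter.2 ⟨hαΦ, heq0.symm⟩
      rw [hmD α hαD, inner_zero_right, ← heq0]
      simp
  -- summing up
  have hsum_eq : ∑ α ∈ P, c α • msum α = (nG:ℝ) • b := by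
    calc ∑ α ∈ P, c α • msum α = ∑ α ∈ P, ∑ g : G, c α • ((g : E ≃ₗᵢ[ℝ] E) α) := by
          refine Finset.sum_congr rfl fun α _ => ?_
          rw [hmsumdef]
          simp only []
          rw [Finset.smul_sum]
      _ = ∑ g : G, ∑ α ∈ P, c α • ((g : E ≃ₗᵢ[ℝ] E) α) := Finset.sum_comm
      _ = ∑ g : G, (g : E ≃ₗᵢ[ℝ] E) b := by
          refine Finset.sum_congr rfl fun g _ => ?_
          rw [← hbP, map_sum]
          refine Finset.sum_congr rfl fun α _ => ?_
          rw [map_smul]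
      _ = ∑ _g : G, b := Finset.sum_congr rfl fun g _ => (hGprop g.1 g.2).2.1
      _ = (nG:ℝ) • b := by
          rw [Finset.sum_const, Finset.card_univ, ← hnGdef, ← Nat.cast_smul_eq_nsmul (R := ℝ)]
  have hbb : (inner ℝ b b : ℝ) = ∑ α ∈ P, c α * (inner ℝ b α : ℝ) := by
    nth_rewrite 2 [← hbP]
    rw [inner_sum]
    exact Finset.sum_congr rfl fun α _ => real_inner_smul_right _ _ _
  have hfinal : -(nG:ℝ) * (inner ℝ b b : ℝ) ≤ (nG:ℝ) * (inner ℝ u b : ℝ) := by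
    calc -(nG:ℝ) * (inner ℝ b b : ℝ) = ∑ α ∈ P, c α * (-(nG:ℝ) * (inner ℝ b α : ℝ)) := by
          rw [hbb, Finset.mul_sum]
          refine Finset.sum_congr rfl fun α _ => ?_
          ring
      _ ≤ ∑ α ∈ P, c α * (inner ℝ u (msum α) : ℝ) :=
          Finset.sum_le_sum fun α hα =>
            mul_le_mul_of_nonneg_left (hm_bound α hα) (hPpos α hα)
      _ = (inner ℝ u (∑ α ∈ P, c α • msum α) : ℝ) := by
          rw [inner_sum]
          refine Finset.sum_congr rfl fun α _ => ?_
          rw [real_inner_smul_right]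
      _ = (nG:ℝ) * (inner ℝ u b : ℝ) := by rw [hsum_eq, real_inner_smul_right]
  have h9 : (nG:ℝ) * (-(inner ℝ b b : ℝ)) ≤ (nG:ℝ) * (inner ℝ u b : ℝ) := by linarith
  exact (mul_le_mul_iff_right₀ hnGpos).1 h9

end ConeLemma

/-- (simply-laced case) For every positive root
`β ∈ R⁺ \ R_J`: the orthogonal projection `(-β)_J` of `-β` onto
`Q(R_J) ⊗ ℝ = span_ℝ {α_j : j ∈ J}` lies in
`ℳ_J = {v ∈ Q(R_J)⊗ℝ : ⟨v, α∨⟩ ∈ [-1,1] for all α ∈ R_J}`; the function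
`u ↦ ⟨u, β∨⟩` on `ℳ_J` attains its minimum at `(-β)_J`; and
`⟨(-β)_J, β∨⟩ > -2`. -/
theorem projection_minimizes_pairing
    {ι E : Type} [Fintype ι] [DecidableEq ι]
    [NormedAddCommGroup E] [InnerProductSpace ℝ E] [FiniteDimensional ℝ E]
    (S : RootSystemCtx ι E) (hSL : S.SimplyLaced)
    (J : Finset ι) (hJne : J.Nonempty) (hJprop : J ≠ Finset.univ)
    (β : E) (hβpos : S.IsPositiveRoot β) (hβJ : β ∉ S.RootsJ J)
    (MJ : Set E)
    (hMJ : MJ = {v : E | v ∈ Submodule.span ℝ (S.simple '' ↑J) ∧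
      ∀ a ∈ S.RootsJ J, -1 ≤ pairR v a ∧ pairR v a ≤ 1})
    (mβ : E)
    (hmβ : mβ = (Submodule.orthogonalProjectionOnto (Submodule.span ℝ (S.simple '' ↑J)) (-β) : E)) :
    mβ ∈ MJ ∧ (∀ u ∈ MJ, pairR mβ β ≤ pairR u β) ∧ -2 < pairR mβ β := by
    classical
  set VJ : Submodule ℝ E := Submodule.span ℝ (S.simple '' ↑J) with hVJ
  have hβR : β ∈ S.Roots := hβpos.1
  have hβVJ : β ∉ VJ := fun h => hβJ ⟨hβR, h⟩
  set bp : E := ((Submodule.orthogonalProjectionOnto VJ β : VJ) : E) with hbp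
  have hmb : mβ = -bp := by
    rw [hmβ, hbp, map_neg]
    simp
  have hbpVJ : bp ∈ VJ := SetLike.coe_mem _
  have hperp : ∀ x ∈ VJ, (inner ℝ (β - bp) x : ℝ) = 0 := by
    intro x hx
    have h1 : β - bp ∈ VJᗮ := by
      rw [hbp, Submodule.coe_orthogonalProjectionOnto_apply]; exact Submodule.sub_starProjection_mem_orthogonal β
    have h2 := (Submodule.mem_orthogonal VJ (β - bp)).1 h1 x hx
    rw [real_inner_comm] at h2
    exact h2
  have hinner_eq : ∀ x ∈ VJ, (inner ℝ β x : ℝ) = inner ℝ bp x := by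
    intro x hx
    have h1 := hperp x hx
    rw [inner_sub_left] at h1
    linarith
  -- the finite set of roots of R_J
  have hRJsub : S.RootsJ J ⊆ S.Roots := fun a ha => ha.1
  have hΦfin : (S.RootsJ J).Finite := S.finite.subset hRJsub
  set Φs : Finset E := hΦfin.toFinset with hΦsdef
  have hΦmem : ∀ a : E, a ∈ Φs ↔ a ∈ S.RootsJ J := fun a => Set.Finite.mem_toFinset _
  have hΦR : ∀ γ ∈ Φs, γ ∈ S.Roots := fun γ hγ => ((hΦmem γ).1 hγ).1
  have hΦV : ∀ γ ∈ Φs, γ ∈ VJ := fun γ hγ => ((hΦmem γ).1 hγ).2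
  have h0' : ∀ γ ∈ Φs, γ ≠ (0:E) := fun γ hγ => S.ne_zero γ (hΦR γ hγ)
  have hpair2 : ∀ γ : E, γ ≠ 0 → pairR γ γ = 2 := by
    intro γ hγ
    unfold pairR
    rw [mul_div_assoc, div_self (inner_self_ne_zero.2 hγ), mul_one]
  have hnegJ : ∀ γ ∈ S.RootsJ J, -γ ∈ S.RootsJ J := by
    intro γ hγ
    have h1 : reflFun γ γ = -γ := by
      unfold reflFun
      rw [hpair2 γ (S.ne_zero γ hγ.1)]
      rw [two_smul]
      abel
    refine ⟨?_, Submodule.neg_mem _ hγ.2⟩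
    have h2 := S.refl_stable γ hγ.1 γ hγ.1
    rw [h1] at h2
    exact h2
  have hneg' : ∀ γ ∈ Φs, -γ ∈ Φs := fun γ hγ =>
    (hΦmem _).2 (hnegJ γ ((hΦmem γ).1 hγ))
  have hrefl' : ∀ γ ∈ Φs, ∀ δ ∈ Φs, γ - pairR γ δ • δ ∈ Φs := by
    intro γ hγ δ hδ
    refine (hΦmem _).2 ⟨?_, ?_⟩
    · have h1 := S.refl_stable γ (hΦR γ hγ) δ (hΦR δ hδ)
      unfold reflFun at h1
      exact h1
    · exact Submodule.sub_mem _ (hΦV γ hγ) (Submodule.smul_mem _ _ (hΦV δ hδ))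
  have hcrys' : ∀ γ ∈ Φs, ∀ δ ∈ Φs, ∃ n : ℤ, pairR γ δ = (n : ℝ) :=
    fun γ hγ δ hδ => S.crystal γ (hΦR γ hγ) δ (hΦR δ hδ)
  have hred' : ∀ γ ∈ Φs, ∀ δ ∈ Φs, ∀ t : ℝ, γ = t • δ → t = 1 ∨ t = -1 := by
    intro γ hγ δ hδ t ht
    apply S.reduced δ (hΦR δ hδ) t
    rw [← ht]
    exact hΦR γ hγ
  -- simple lacing bounds for pairings of β with roots of R_J
  have hSLβ : ∀ a ∈ S.RootsJ J, pairR β a = -1 ∨ pairR β a = 0 ∨ pairR β a = 1 := by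
    intro a ha
    have haR : a ∈ S.Roots := ha.1
    have hne1 : a ≠ β := fun h => hβJ (h ▸ ha)
    have hne2 : a ≠ -β := by
      intro h
      apply hβJ
      have h2 : β = -a := by rw [h, neg_neg]
      have h3 := hnegJ a ha
      rw [← h2] at h3
      exact h3
    exact hSL β hβR a haR hne1 hne2
  have hmβVJ : mβ ∈ VJ := by rw [hmb]; exact Submodule.neg_mem _ hbpVJ
  have hpairmβ : ∀ a ∈ S.RootsJ J, pairR mβ a = - pairR β a := by
    intro a ha
    unfold pairR
    have h1 : (inner ℝ mβ a : ℝ) = - inner ℝ β a := by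
      rw [hmb, inner_neg_left]
      have h2 := hinner_eq a ha.2
      linarith
    rw [h1]
    ring
  have part1 : mβ ∈ MJ := by
    rw [hMJ]
    refine ⟨hmβVJ, ?_⟩
    intro a ha
    rcases hSLβ a ha with h | h | h <;> rw [hpairmβ a ha, h] <;> norm_num
  have hββ : 0 < (inner ℝ β β : ℝ) := rsp_inner_self_pos (S.ne_zero β hβR)
  have hdiffne : β - bp ≠ 0 := by
    intro h
    rw [sub_eq_zero] at h
    exact hβVJ (h ▸ hbpVJ)
  have hbpβ : (inner ℝ β bp : ℝ) = inner ℝ bp bp := by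
    have h1 := hperp bp hbpVJ
    rw [inner_sub_left] at h1
    linarith
  have hlt : (inner ℝ bp bp : ℝ) < inner ℝ β β := by
    have h1 := rsp_inner_self_pos hdiffne
    have h2 : (inner ℝ (β - bp) (β - bp) : ℝ) =
        inner ℝ β β - 2 * inner ℝ β bp + inner ℝ bp bp := by
      rw [inner_sub_left, inner_sub_right, inner_sub_right]
      rw [real_inner_comm bp β]
      ring
    rw [h2, hbpβ] at h1
    linarith
  have hmββ : (inner ℝ mβ β : ℝ) = - inner ℝ bp bp := by
    rw [hmb, inner_neg_left]
    rw [real_inner_comm β bp]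
    rw [hbpβ]
  have part3 : -2 < pairR mβ β := by
    unfold pairR
    rw [hmββ]
    rw [lt_div_iff₀ hββ]
    linarith
  refine ⟨part1, ?_, part3⟩
  intro u hu
  rw [hMJ] at hu
  obtain ⟨huV, hubd⟩ := hu
  -- apply the cone lemma
  have hVJle : VJ ≤ Submodule.span ℝ (Φs : Set E) := by
    rw [hVJ]
    apply Submodule.span_le.2
    intro x hx
    obtain ⟨j, hj, rfl⟩ := hx
    apply Submodule.subset_span
    apply Finset.mem_coe.2
    refine (hΦmem _).2 ⟨S.simple_mem j, ?_⟩
    exact Submodule.subset_span ⟨j, hj, rfl⟩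
  have hbspan : bp ∈ Submodule.span ℝ (Φs : Set E) := hVJle hbpVJ
  have hu' : ∀ γ ∈ Φs, 0 < (inner ℝ bp γ : ℝ) → -(inner ℝ bp γ : ℝ) ≤ (inner ℝ u γ : ℝ) := by
    intro γ hγ hposγ
    have hγJ : γ ∈ S.RootsJ J := (hΦmem γ).1 hγ
    have hγγ : 0 < (inner ℝ γ γ : ℝ) := rsp_inner_self_pos (h0' γ hγ)
    have heq : (inner ℝ β γ : ℝ) = inner ℝ bp γ := hinner_eq γ hγJ.2
    have hp1 : pairR β γ = 1 := by
      rcases hSLβ γ hγJ with h | h | h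
      · exfalso
        unfold pairR at h
        rw [heq] at h
        have := div_pos (by linarith : (0:ℝ) < 2 * inner ℝ bp γ) hγγ
        linarith
      · exfalso
        unfold pairR at h
        rw [heq] at h
        rw [div_eq_zero_iff] at h
        rcases h with h | h
        · linarith
        · linarith
      · exact h
    have h2βγ : 2 * (inner ℝ β γ : ℝ) = inner ℝ γ γ := by
      unfold pairR at hp1
      field_simp at hp1
      linarith
    have hub := (hubd γ hγJ).1
    unfold pairR at hub
    rw [le_div_iff₀ hγγ] at hub
    rw [← heq]
    linarith
  have hcone := rsp_cone Φs h0' hneg' hrefl' hcrys' hred' bp hbspan u hu'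
  -- translate back
  have huβ : (inner ℝ u β : ℝ) = inner ℝ u bp := by
    rw [real_inner_comm β u, real_inner_comm bp u]
    exact hinner_eq u huV
  have hub2 : (inner ℝ u bp : ℝ) = inner ℝ bp u := real_inner_comm bp u
  unfold pairR
  rw [div_le_div_iff₀ hββ hββ]
  have h3 : (inner ℝ mβ β : ℝ) ≤ inner ℝ u β := by
    rw [hmββ, huβ]
    have h4 : (inner ℝ u bp : ℝ) = inner ℝ bp u := real_inner_comm bp u
    linarith [hcone]
  nlinarith
end
end
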